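/- arXiv:math/0605003 — 5 statements merged into one kernel-verified Lean document; each statement's English description precedes it below -/
import Mathlib

section
/- Let μ_{α,n} ∈ (0,1) be defined by the equation (1+μ_{α,n}²)/(2μ_{α,n}) = (3-ρ_{α,n})/(1+ρ_{α,n}) where ρ_{α,n} = cos(α/n). Then μ_{α,n} = 1 - α/n + O(n⁻²) as n → ∞, and consequently μ_{α,n}^{n/2} → exp(-α/2). -/
open Filter Asymptotics Topology

set_option maxHeartbeats 1000000

/-- If μ_{α,n} ∈ (0,1) satisfies (1+μ²)/(2μ) = (3-ρ)/(1+ρ) with ρ = cos(α/n), then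
    μ_{α,n} = 1 - α/n + O(n⁻²) and μ_{α,n}^{n/2} → exp(-α/2). -/
theorem stmt1 (α : ℝ) (hα : 0 < α) (μ : ℕ → ℝ)
    (hμ : ∀ᶠ n : ℕ in atTop, μ n ∈ Set.Ioo (0 : ℝ) 1 ∧
      (1 + (μ n) ^ 2) / (2 * μ n) =
        (3 - Real.cos (α / n)) / (1 + Real.cos (α / n))) :
    (fun n : ℕ => μ n - (1 - α / n)) =O[atTop] (fun n : ℕ => ((n : ℝ) ^ 2)⁻¹) ∧
    Tendsto (fun n : ℕ => (μ n) ^ ((n : ℝ) / 2)) atTop (nhds (Real.exp (-α / 2))) := by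
  -- Closed form: eventually μ n = (1 - sin(α/(2n)))/(1 + sin(α/(2n)))
  have hform : ∀ᶠ n : ℕ in atTop,
      0 < α / (2 * (n : ℝ)) ∧ α / (2 * (n : ℝ)) ≤ 1/2 ∧
      0 < μ n ∧ μ n < 1 ∧ (1 : ℝ) ≤ (n : ℝ) ∧
      μ n = (1 - Real.sin (α / (2 * (n : ℝ)))) / (1 + Real.sin (α / (2 * (n : ℝ)))) := by
    filter_upwards [hμ, eventually_ge_atTop (⌈α⌉₊ + 1)] with n hn hn'
    have hn1 : (1 : ℝ) ≤ (n : ℝ) := by exact_mod_cast Nat.one_le_iff_ne_zero.mpr (by omega)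
    have hnpos : (0 : ℝ) < (n : ℝ) := by linarith
    have hαn : α ≤ (n : ℝ) := by
      calc α ≤ (⌈α⌉₊ : ℝ) := Nat.le_ceil α
        _ ≤ (n : ℝ) := by exact_mod_cast Nat.le_of_succ_le hn'
    have hx0 : 0 < α / (2 * (n : ℝ)) := by positivity
    have hx1 : α / (2 * (n : ℝ)) ≤ 1/2 := by
      rw [div_le_iff₀ (by positivity)]; linarith
    set s := Real.sin (α / (2 * (n : ℝ))) with hs
    have hspos : 0 < s := Real.sin_pos_of_pos_of_lt_pi hx0 (by
      have := Real.pi_gt_three; linarith)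
    have hsle : s ≤ α / (2 * (n : ℝ)) := le_of_lt (Real.sin_lt hx0)
    have hs1 : s < 1 := by linarith
    obtain ⟨⟨hμ0, hμ1⟩, heq⟩ := hn
    have hcos : Real.cos (α / (n : ℝ)) = 1 - 2 * s ^ 2 := by
      have h2 : α / (n : ℝ) = 2 * (α / (2 * (n : ℝ))) := by field_simp
      rw [h2, Real.cos_two_mul, Real.cos_sq']; ring
    rw [hcos] at heq
    have hd1 : (0 : ℝ) < 2 * μ n := by linarith
    have hd2 : (0 : ℝ) < 1 + (1 - 2 * s ^ 2) := by nlinarith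
    rw [div_eq_div_iff (ne_of_gt hd1) (ne_of_gt hd2)] at heq
    have hfac : ((1 + s) * μ n - (1 - s)) * ((1 - s) * μ n - (1 + s)) = 0 := by
      linear_combination heq / 2
    have hneg : (1 - s) * μ n - (1 + s) < 0 := by nlinarith
    rcases mul_eq_zero.mp hfac with h | h
    · refine ⟨hx0, hx1, hμ0, hμ1, hn1, ?_⟩
      rw [eq_div_iff (by linarith)]; linarith
    · exact absurd h (ne_of_lt hneg)
  -- Part 1: the big-O estimate
  have hO : (fun n : ℕ => μ n - (1 - α / n)) =O[atTop] (fun n : ℕ => ((n : ℝ) ^ 2)⁻¹) := by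
    rw [isBigO_iff]
    refine ⟨α ^ 2, ?_⟩
    filter_upwards [hform] with n ⟨hx0, hx1, hμ0, hμ1, hn1, hμn⟩
    set x := α / (2 * (n : ℝ)) with hx
    set s := Real.sin x with hs
    have hnpos : (0 : ℝ) < (n : ℝ) := by linarith
    have hspos : 0 < s := Real.sin_pos_of_pos_of_lt_pi hx0 (by
      have := Real.pi_gt_three; linarith)
    have hsle : s ≤ x := le_of_lt (Real.sin_lt hx0)
    have hslb : x - x ^ 3 / 4 < s := by
      have := Real.sin_gt_sub_cube hx0; have := pow_pos hx0 3; linarith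
    have hα2x : α / (n : ℝ) = 2 * x := by
      rw [hx, mul_div_assoc']
      rw [mul_div_mul_left _ _ (two_ne_zero)]
    have key : μ n - (1 - α / n) = (2 * x - 2 * s) + 2 * s ^ 2 / (1 + s) := by
      rw [hμn, hα2x]
      have h1s : (0:ℝ) < 1 + s := by linarith
      field_simp
      ring
    have hnonneg : 0 ≤ μ n - (1 - α / n) := by
      rw [key]; have : 0 ≤ 2 * s ^ 2 / (1 + s) := by positivity
      linarith
    have hxval : x ^ 2 = α ^ 2 / (4 * (n : ℝ) ^ 2) := by
      rw [hx, div_pow]; congr 1; ring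
    have hbound : μ n - (1 - α / n) ≤ α ^ 2 * ((n : ℝ) ^ 2)⁻¹ := by
      rw [key]
      have h1 : 2 * s ^ 2 / (1 + s) ≤ 2 * s ^ 2 :=
        div_le_self (by positivity) (by linarith)
      have h2 : 2 * s ^ 2 ≤ 2 * x ^ 2 := by nlinarith
      have h3 : 2 * x - 2 * s ≤ x ^ 3 / 2 := by nlinarith
      have h4 : x ^ 3 / 2 ≤ x ^ 2 / 4 := by nlinarith
      have h5 : 2 * x ^ 2 + x ^ 2 / 4 ≤ 4 * x ^ 2 := by nlinarith
      have h6 : 4 * x ^ 2 = α ^ 2 * ((n : ℝ) ^ 2)⁻¹ := by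
        rw [hxval]; field_simp
      linarith
    rw [Real.norm_eq_abs, Real.norm_eq_abs, abs_of_nonneg hnonneg, abs_of_nonneg (by positivity : (0:ℝ) ≤ ((n : ℝ) ^ 2)⁻¹)]
    exact hbound
  refine ⟨hO, ?_⟩
  -- μ n → 1
  have hx0 : Tendsto (fun n : ℕ => α / (2 * (n : ℝ))) atTop (nhds 0) :=
    Tendsto.div_atTop tendsto_const_nhds
      (Tendsto.const_mul_atTop two_pos tendsto_natCast_atTop_atTop)
  have hsin : Tendsto (fun n : ℕ => Real.sin (α / (2 * (n : ℝ)))) atTop (nhds 0) := by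
    have := (Real.continuous_sin.tendsto 0).comp hx0
    simpa [Function.comp_def] using this
  have hμ1 : Tendsto μ atTop (nhds 1) := by
    have h : Tendsto (fun n : ℕ =>
        (1 - Real.sin (α / (2 * (n : ℝ)))) / (1 + Real.sin (α / (2 * (n : ℝ)))))
        atTop (nhds 1) := by
      have := (((tendsto_const_nhds : Tendsto (fun _ : ℕ => (1:ℝ)) atTop (nhds 1)).sub
        hsin).div ((tendsto_const_nhds : Tendsto (fun _ : ℕ => (1:ℝ)) atTop (nhds 1)).add hsin)
        (by norm_num : (1 : ℝ) + 0 ≠ 0))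
      simp only [sub_zero, add_zero, div_one] at this
      exact this
    refine h.congr' ?_
    filter_upwards [hform] with n ⟨_, _, _, _, _, hμn⟩ using hμn.symm
  -- n * (μ n - 1) → -α
  have hnμ : Tendsto (fun n : ℕ => (n : ℝ) * (μ n - 1)) atTop (nhds (-α)) := by
    have h1 : (fun n : ℕ => (n : ℝ) * (μ n - (1 - α / n))) =O[atTop]
        (fun n : ℕ => (n : ℝ)⁻¹) := by
      have hm := (isBigO_refl (fun n : ℕ => (n : ℝ)) atTop).mul hO
      refine hm.congr' EventuallyEq.rfl ?_
      filter_upwards [eventually_ge_atTop 1] with n hn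
      have hnpos : (0 : ℝ) < (n : ℝ) := by exact_mod_cast hn
      field_simp
    have h2 : Tendsto (fun n : ℕ => (n : ℝ) * (μ n - (1 - α / n))) atTop (nhds 0) :=
      h1.trans_tendsto (tendsto_inv_atTop_zero.comp tendsto_natCast_atTop_atTop)
    have h3 := h2.sub (tendsto_const_nhds : Tendsto (fun _ : ℕ => α) atTop (nhds α))
    rw [zero_sub] at h3
    refine h3.congr' ?_
    filter_upwards [eventually_ge_atTop 1] with n hn
    have hnpos : (0 : ℝ) < (n : ℝ) := by exact_mod_cast hn
    field_simp; ring
  -- log μ n / (μ n - 1) → 1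
  have hslope : Tendsto (fun n : ℕ => Real.log (μ n) / (μ n - 1)) atTop (nhds 1) := by
    have hd : HasDerivAt Real.log 1 1 := by
      simpa using Real.hasDerivAt_log one_ne_zero
    rw [hasDerivAt_iff_tendsto_slope] at hd
    have hμne : Tendsto μ atTop (𝓝[≠] (1 : ℝ)) := by
      rw [tendsto_nhdsWithin_iff]
      refine ⟨hμ1, ?_⟩
      filter_upwards [hform] with n ⟨_, _, _, hμlt, _, _⟩
      exact ne_of_lt hμlt
    have := hd.comp hμne
    refine this.congr ?_
    intro n
    simp [slope_def_field, Function.comp, Real.log_one]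
  -- (n/2) * log μ n → -α/2
  have hlog : Tendsto (fun n : ℕ => (n : ℝ) / 2 * Real.log (μ n)) atTop (nhds (-α / 2)) := by
    have h := hslope.mul hnμ
    rw [one_mul] at h
    have h2 := h.const_mul (1/2 : ℝ)
    have heq : (1/2 : ℝ) * (-α) = -α / 2 := by ring
    rw [heq] at h2
    refine h2.congr' ?_
    filter_upwards [hform] with n ⟨_, _, _, hμlt, _, _⟩
    have hne : μ n - 1 ≠ 0 := by intro h; apply absurd (by linarith : μ n = 1) (ne_of_lt hμlt)
    field_simp
  have hexp := (Real.continuous_exp.tendsto _).comp hlog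
  refine hexp.congr' ?_
  filter_upwards [hform] with n ⟨_, _, hμ0, _, _, _⟩
  rw [Function.comp_apply, Real.rpow_def_of_pos hμ0, mul_comm]
end

section
/- For r ∈ [0,1), the function f_r(t) = ((1-rt)/(1-r/t))^{-1/2} defined on the unit circle (with the principal branch, so that f_r(−1)=1) converges in measure, as r → 1⁻, to the function u_{-1/2,1}(e^{iθ}) = exp(-i(θ-π)/2) for 0 < θ < 2π. -/
open MeasureTheory Complex Filter

/-- Pointwise convergence for θ ∈ (0, 2π). -/
lemma stmt5_pointwise {θ : ℝ} (hθ : θ ∈ Set.Ioo (0 : ℝ) (2 * Real.pi)) :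
    Tendsto (fun r : ℝ =>
        (((1 : ℂ) - r * Complex.exp (θ * Complex.I)) /
          ((1 : ℂ) - r * Complex.exp (-θ * Complex.I))) ^ (-(1 / 2) : ℂ))
      (nhdsWithin 1 (Set.Iio (1 : ℝ)))
      (nhds (Complex.exp (-(Complex.I * (θ - Real.pi)) / 2))) := by
  obtain ⟨hθ0, hθ2⟩ := hθ
  have hpi := Real.pi_pos
  -- exp(θ I) ≠ 1
  have hne : Complex.exp ((θ : ℂ) * Complex.I) ≠ 1 := by
    intro h
    rw [Complex.exp_eq_one_iff] at h
    obtain ⟨n, hn⟩ := h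
    have hn' : (θ : ℂ) * Complex.I = ((n : ℂ) * (2 * (Real.pi : ℂ))) * Complex.I := by
      rw [hn]; ring
    have h2 : (θ : ℂ) = (n : ℂ) * (2 * (Real.pi : ℂ)) :=
      mul_right_cancel₀ Complex.I_ne_zero hn'
    have h3 : θ = (n : ℝ) * (2 * Real.pi) := by exact_mod_cast h2
    have hnpos : (0 : ℝ) < (n : ℝ) := by nlinarith
    have h1n : (1 : ℝ) ≤ (n : ℝ) := by exact_mod_cast Int.cast_pos.mp hnpos
    nlinarith
  have hne' : Complex.exp (-(θ : ℂ) * Complex.I) ≠ 1 := by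
    intro h
    apply hne
    have : Complex.exp ((θ : ℂ) * Complex.I) * Complex.exp (-(θ : ℂ) * Complex.I) = 1 := by
      rw [← Complex.exp_add]; ring_nf; exact Complex.exp_zero
    rw [h, mul_one] at this
    exact this
  have hden : (1 : ℂ) - Complex.exp (-(θ : ℂ) * Complex.I) ≠ 0 :=
    sub_ne_zero.mpr (Ne.symm hne')
  have he0 : Complex.exp ((θ : ℂ) * Complex.I) ≠ 0 := Complex.exp_ne_zero _
  -- limit of the base
  have hval : ((1 : ℂ) - Complex.exp ((θ : ℂ) * Complex.I)) /
      ((1 : ℂ) - Complex.exp (-(θ : ℂ) * Complex.I)) = -Complex.exp ((θ : ℂ) * Complex.I) := by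
    have hinv : Complex.exp (-(θ : ℂ) * Complex.I) = (Complex.exp ((θ : ℂ) * Complex.I))⁻¹ := by
      rw [neg_mul, Complex.exp_neg]
    rw [div_eq_iff hden, hinv]
    field_simp
    ring
  have hbase : Tendsto (fun r : ℝ =>
      ((1 : ℂ) - r * Complex.exp (θ * Complex.I)) /
        ((1 : ℂ) - r * Complex.exp (-θ * Complex.I)))
      (nhdsWithin 1 (Set.Iio (1 : ℝ))) (nhds (-Complex.exp ((θ : ℂ) * Complex.I))) := by
    have hnum : Tendsto (fun r : ℝ => (1 : ℂ) - r * Complex.exp (θ * Complex.I)) (nhds 1)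
        (nhds ((1 : ℂ) - Complex.exp ((θ : ℂ) * Complex.I))) := by
      have : Continuous (fun r : ℝ => (1 : ℂ) - r * Complex.exp (θ * Complex.I)) := by
        continuity
      simpa using this.tendsto 1
    have hdenom : Tendsto (fun r : ℝ => (1 : ℂ) - r * Complex.exp (-θ * Complex.I)) (nhds 1)
        (nhds ((1 : ℂ) - Complex.exp (-(θ : ℂ) * Complex.I))) := by
      have : Continuous (fun r : ℝ => (1 : ℂ) - r * Complex.exp (-θ * Complex.I)) := by
        continuity
      simpa using this.tendsto 1
    have := (hnum.div hdenom hden)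
    rw [hval] at this
    exact this.mono_left nhdsWithin_le_nhds
  -- continuity of cpow at the limit point
  have hcont : ContinuousAt (fun z : ℂ => z ^ (-(1 / 2) : ℂ))
      (-Complex.exp ((θ : ℂ) * Complex.I)) := by
    apply continuousAt_cpow_const
    rw [Complex.mem_slitPlane_iff]
    rcases eq_or_ne (Real.sin θ) 0 with hs | hs
    · left
      have hθπ : θ = Real.pi := by
        rcases Real.sin_eq_zero_iff.mp hs with ⟨n, hn⟩
        have hnpos : (0 : ℝ) < (n : ℝ) := by nlinarith
        have h2n : (n : ℝ) < 2 := by nlinarith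
        have hn1 : n = 1 := by
          have h1 : 0 < n := by exact_mod_cast hnpos
          have h2 : n < 2 := by exact_mod_cast h2n
          omega
        have : (n : ℝ) = 1 := by exact_mod_cast hn1
        nlinarith
      simp [hθπ, Complex.exp_ofReal_mul_I_re]
    · right
      simp [Complex.exp_ofReal_mul_I_im, hs]
  -- the value of the power at the limit point
  have hE : -Complex.exp ((θ : ℂ) * Complex.I) =
      Complex.exp (Complex.I * ((θ : ℂ) - (Real.pi : ℂ))) := by
    have : Complex.I * ((θ : ℂ) - (Real.pi : ℂ)) =
        (θ : ℂ) * Complex.I + (-((Real.pi : ℂ) * Complex.I)) := by ring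
    rw [this, Complex.exp_add, Complex.exp_neg, Complex.exp_pi_mul_I]
    field_simp
  have him : (Complex.I * ((θ : ℂ) - (Real.pi : ℂ))).im = θ - Real.pi := by
    simp [Complex.mul_im]
  have hfinal : (-Complex.exp ((θ : ℂ) * Complex.I)) ^ (-(1 / 2) : ℂ) =
      Complex.exp (-(Complex.I * ((θ : ℂ) - (Real.pi : ℂ))) / 2) := by
    rw [hE, Complex.cpow_def_of_ne_zero (Complex.exp_ne_zero _), Complex.log_exp]
    · congr 1; ring
    · rw [him]; linarith
    · rw [him]; linarith
  have := hcont.tendsto.comp hbase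
  rw [hfinal] at this
  exact this

/-- As r → 1⁻, the function f_r(e^{iθ}) = ((1-re^{iθ})/(1-re^{-iθ}))^{-1/2}
    (principal branch) converges in measure on (0,2π) to
    u_{-1/2,1}(e^{iθ}) = exp(-i(θ-π)/2). -/
theorem stmt5 :
    TendstoInMeasure (volume.restrict (Set.Ioo (0 : ℝ) (2 * Real.pi)))
      (fun r : ℝ => fun θ : ℝ =>
        (((1 : ℂ) - r * Complex.exp (θ * Complex.I)) /
          ((1 : ℂ) - r * Complex.exp (-θ * Complex.I))) ^ (-(1 / 2) : ℂ))
      (nhdsWithin 1 (Set.Iio (1 : ℝ)))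
      (fun θ : ℝ => Complex.exp (-(Complex.I * (θ - Real.pi)) / 2)) := by
  set μ := volume.restrict (Set.Ioo (0 : ℝ) (2 * Real.pi)) with hμ
  haveI hfin : IsFiniteMeasure μ := by
    constructor
    rw [hμ, Measure.restrict_apply_univ, Real.volume_Ioo]
    exact ENNReal.ofReal_lt_top
  have hmeas : ∀ r : ℝ, AEStronglyMeasurable (fun θ : ℝ =>
      (((1 : ℂ) - r * Complex.exp (θ * Complex.I)) /
        ((1 : ℂ) - r * Complex.exp (-θ * Complex.I))) ^ (-(1 / 2) : ℂ)) μ := by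
    intro r
    have hb : Measurable (fun θ : ℝ =>
        ((1 : ℂ) - r * Complex.exp (θ * Complex.I)) /
          ((1 : ℂ) - r * Complex.exp (-θ * Complex.I))) := by
      apply Measurable.div
      · exact (Continuous.measurable (by continuity))
      · exact (Continuous.measurable (by continuity))
    have heq : (fun θ : ℝ =>
        (((1 : ℂ) - r * Complex.exp (θ * Complex.I)) /
          ((1 : ℂ) - r * Complex.exp (-θ * Complex.I))) ^ (-(1 / 2) : ℂ)) =
        fun θ : ℝ =>
          if ((1 : ℂ) - r * Complex.exp (θ * Complex.I)) /
              ((1 : ℂ) - r * Complex.exp (-θ * Complex.I)) = 0 then 0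
          else Complex.exp (Complex.log (((1 : ℂ) - r * Complex.exp (θ * Complex.I)) /
              ((1 : ℂ) - r * Complex.exp (-θ * Complex.I))) * (-(1 / 2) : ℂ)) := by
      funext θ
      rw [Complex.cpow_def]
      split_ifs with h1 h2
      · norm_num at h2
      · rfl
      · rfl
    rw [heq]
    have hset : MeasurableSet {θ : ℝ |
        ((1 : ℂ) - r * Complex.exp (θ * Complex.I)) /
          ((1 : ℂ) - r * Complex.exp (-θ * Complex.I)) = 0} :=
      hb (measurableSet_singleton 0)
    exact (Measurable.ite hset measurable_const
      ((hb.clog.mul_const _).cexp)).aestronglyMeasurable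
  have hae : ∀ᵐ (θ : ℝ) ∂μ, Tendsto (fun r : ℝ =>
      (((1 : ℂ) - r * Complex.exp (θ * Complex.I)) /
        ((1 : ℂ) - r * Complex.exp (-θ * Complex.I))) ^ (-(1 / 2) : ℂ))
      (nhdsWithin 1 (Set.Iio (1 : ℝ)))
      (nhds (Complex.exp (-(Complex.I * (θ - Real.pi)) / 2))) := by
    filter_upwards [ae_restrict_mem measurableSet_Ioo] with θ hθ
    exact stmt5_pointwise hθ
  intro ε hε
  rw [Filter.tendsto_iff_seq_tendsto]
  intro x hx
  have h := tendstoInMeasure_of_tendsto_ae (μ := μ)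
    (f := fun n : ℕ => fun θ : ℝ =>
      (((1 : ℂ) - (x n) * Complex.exp (θ * Complex.I)) /
        ((1 : ℂ) - (x n) * Complex.exp (-θ * Complex.I))) ^ (-(1 / 2) : ℂ))
    (g := fun θ : ℝ => Complex.exp (-(Complex.I * (θ - Real.pi)) / 2))
    (fun n => hmeas (x n))
    (hae.mono fun θ hθ => hθ.comp hx)
  exact h ε hε
end

section
/- For a ∈ L¹ of the unit circle, even (a(e^{-iθ}) = a(e^{iθ})), define b ∈ L¹[-1,1] by b(cos θ) = a(e^{iθ})·sqrt((1+cos θ)/(1-cos θ)), assuming b is integrable. Then the Fourier coefficients a_k of a and the moments b_k = (1/π)∫_{-1}^1 b(x)(2x)^{k-1}dx satisfy: det(T_n(a) + H_n(a)) = det H_n[b], where T_n(a) = (a_{j-k})_{j,k=0}^{n-1} and H_n(a) = (a_{j+k+1})_{j,k=0}^{n-1}, and H_n[b] = (b_{j+k+1})_{j,k=0}^{n-1}. -/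
open MeasureTheory Matrix Polynomial

set_option maxHeartbeats 1000000

lemma integrable_fun_sum {ι : Type*} (s : Finset ι) (A B : ℝ) (g : ι → ℝ → ℝ)
    (h : ∀ i ∈ s, IntervalIntegrable (g i) volume A B) :
    IntervalIntegrable (fun θ => ∑ i ∈ s, g i θ) volume A B := by
  have h2 := IntervalIntegrable.sum (μ := volume) (a := A) (b := B) s h
  rwa [Finset.sum_fn] at h2

lemma double_swap {ι : Type*} [Fintype ι] (A B : ℝ) (c : ι → ι → ℝ) (f : ι → ι → ℝ → ℝ)
    (h : ∀ i l, IntervalIntegrable (f i l) volume A B) :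
    (∫ θ in A..B, ∑ l : ι, ∑ i : ι, c i l * f i l θ)
      = ∑ l : ι, ∑ i : ι, c i l * ∫ θ in A..B, f i l θ := by
  rw [intervalIntegral.integral_finset_sum (fun l _ =>
    integrable_fun_sum Finset.univ A B _ (fun i _ => (h i l).const_mul _))]
  refine Finset.sum_congr rfl fun l _ => ?_
  rw [intervalIntegral.integral_finset_sum (fun i _ => (h i l).const_mul _)]
  exact Finset.sum_congr rfl fun i _ => intervalIntegral.integral_const_mul _ _


noncomputable def myV : ℕ → Polynomial ℝ
  | 0 => 1
  | 1 => Polynomial.C 2 * Polynomial.X - 1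
  | (n+2) => Polynomial.C 2 * (Polynomial.X * myV (n+1)) - myV n

lemma myV_natDegree_le (n : ℕ) : (myV n).natDegree ≤ n := by
  induction n using Nat.twoStepInduction with
  | zero => simp [myV]
  | one =>
    simp only [myV]
    refine le_trans (natDegree_sub_le _ _) ?_
    refine max_le (le_trans (natDegree_C_mul_le _ _) (by simp)) (by simp)
  | more n ih1 ih2 =>
    simp only [myV]
    refine le_trans (natDegree_sub_le _ _) ?_
    refine max_le ?_ (by omega)
    refine le_trans (natDegree_C_mul_le _ _) (le_trans natDegree_mul_le ?_)
    simp only [natDegree_X]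
    omega

lemma myV_coeff_self (n : ℕ) : (myV n).coeff n = 2 ^ n := by
  induction n using Nat.twoStepInduction with
  | zero => simp [myV]
  | one => simp [myV, coeff_sub, coeff_one]
  | more n ih1 ih2 =>
    have h0 : (myV n).coeff (n + 2) = 0 :=
      coeff_eq_zero_of_natDegree_lt (lt_of_le_of_lt (myV_natDegree_le n) (by omega))
    simp only [myV, coeff_sub, coeff_C_mul, coeff_X_mul, ih2, h0]
    ring

lemma myV_eval (n : ℕ) (θ : ℝ) :
    Real.cos (θ / 2) * (myV n).eval (Real.cos θ) = Real.cos (((n : ℝ) + 1 / 2) * θ) := by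
  induction n using Nat.twoStepInduction with
  | zero => simp [myV]; ring_nf
  | one =>
    simp only [myV, eval_sub, eval_mul, eval_C, eval_X, eval_one, Nat.cast_one]
    have h1 : ((1 : ℝ) + 1 / 2) * θ = θ + θ / 2 := by ring
    rw [h1, Real.cos_add]
    have h2 : Real.sin θ = 2 * Real.sin (θ / 2) * Real.cos (θ / 2) := by
      rw [← Real.sin_two_mul]; ring_nf
    have h3 : Real.sin (θ / 2) ^ 2 = 1 - Real.cos (θ / 2) ^ 2 := by
      rw [← Real.sin_sq_add_cos_sq (θ / 2)]; ring
    have h4 : Real.cos θ = 2 * Real.cos (θ / 2) ^ 2 - 1 := by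
      have := Real.cos_sq (θ / 2)
      have h5 : 2 * (θ / 2) = θ := by ring
      rw [h5] at this
      linarith
    rw [h2, h4]
    linear_combination 2 * Real.cos (θ / 2) * h3
  | more n ih1 ih2 =>
    simp only [myV, eval_sub, eval_mul, eval_C, eval_X] at *
    push_cast
    have key : Real.cos ((↑n + 2 + 1 / 2) * θ) + Real.cos ((↑n + 1 / 2) * θ)
        = 2 * Real.cos θ * Real.cos ((↑n + 1 + 1 / 2) * θ) := by
      have e1 : ((n : ℝ) + 2 + 1 / 2) * θ = ((n : ℝ) + 1 + 1 / 2) * θ + θ := by ring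
      have e2 : ((n : ℝ) + 1 / 2) * θ = ((n : ℝ) + 1 + 1 / 2) * θ - θ := by ring
      rw [e1, e2, Real.cos_add, Real.cos_sub]
      ring
    push_cast at ih1 ih2
    linear_combination 2 * Real.cos θ * ih2 - ih1 - key

lemma sum_L {n : ℕ} (j : Fin n) (x : ℝ) :
    ∑ i : Fin n, ((myV (j : ℕ)).coeff (i : ℕ) / 2 ^ (i : ℕ)) * (2 * x) ^ (i : ℕ)
      = (myV (j : ℕ)).eval x := by
  rw [Polynomial.eval_eq_sum_range' (lt_of_le_of_lt (myV_natDegree_le j) j.2) x,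
      ← Fin.sum_univ_eq_sum_range]
  refine Finset.sum_congr rfl fun i _ => ?_
  rw [mul_pow]
  have h2 : (2 : ℝ) ^ (i : ℕ) ≠ 0 := by positivity
  field_simp

lemma key_identity {n : ℕ} (j k : Fin n) (θ : ℝ) :
    Real.cos ((((j : ℕ) : ℝ) - ((k : ℕ) : ℝ)) * θ)
      + Real.cos ((((j : ℕ) + (k : ℕ) + 1 : ℕ) : ℝ) * θ)
      = ∑ l : Fin n, ∑ i : Fin n,
          (((myV (j : ℕ)).coeff (i : ℕ) / 2 ^ (i : ℕ))
              * ((myV (k : ℕ)).coeff (l : ℕ) / 2 ^ (l : ℕ)))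
            * ((1 + Real.cos θ) * (2 * Real.cos θ) ^ ((i : ℕ) + (l : ℕ))) := by
  set c := Real.cos θ with hc
  set y := 2 * Real.cos θ with hy
  have expand : (1 + c) *
      ((∑ i : Fin n, ((myV (j : ℕ)).coeff (i : ℕ) / 2 ^ (i : ℕ)) * y ^ (i : ℕ))
        * (∑ l : Fin n, ((myV (k : ℕ)).coeff (l : ℕ) / 2 ^ (l : ℕ)) * y ^ (l : ℕ)))
      = ∑ l : Fin n, ∑ i : Fin n,
          (((myV (j : ℕ)).coeff (i : ℕ) / 2 ^ (i : ℕ))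
              * ((myV (k : ℕ)).coeff (l : ℕ) / 2 ^ (l : ℕ)))
            * ((1 + c) * y ^ ((i : ℕ) + (l : ℕ))) := by
    rw [Finset.sum_mul_sum, Finset.mul_sum, Finset.sum_comm]
    refine Finset.sum_congr rfl fun l _ => ?_
    rw [Finset.mul_sum]
    exact Finset.sum_congr rfl fun i _ => by rw [pow_add]; ring
  rw [← expand, sum_L j c, sum_L k c]
  have hhalf : 1 + c = 2 * Real.cos (θ / 2) ^ 2 := by
    have := Real.cos_sq (θ / 2)
    rw [show 2 * (θ / 2) = θ by ring] at this
    rw [hc]; linarith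
  have tri : Real.cos ((((j : ℕ) : ℝ) - ((k : ℕ) : ℝ)) * θ)
      + Real.cos ((((j : ℕ) + (k : ℕ) + 1 : ℕ) : ℝ) * θ)
      = 2 * Real.cos ((((j : ℕ) : ℝ) + 1 / 2) * θ) * Real.cos ((((k : ℕ) : ℝ) + 1 / 2) * θ) := by
    rw [Real.cos_add_cos]
    push_cast
    have e1 : (((((j : ℕ) : ℝ) - ((k : ℕ) : ℝ)) * θ)
        + ((((j : ℕ) : ℝ) + ((k : ℕ) : ℝ) + 1) * θ)) / 2 = (((j : ℕ) : ℝ) + 1 / 2) * θ := by ring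
    have e2 : (((((j : ℕ) : ℝ) - ((k : ℕ) : ℝ)) * θ)
        - ((((j : ℕ) : ℝ) + ((k : ℕ) : ℝ) + 1) * θ)) / 2 = -((((k : ℕ) : ℝ) + 1 / 2) * θ) := by ring
    rw [e1, e2, Real.cos_neg]
  rw [tri, ← myV_eval (j : ℕ) θ, ← myV_eval (k : ℕ) θ, hhalf]
  ring

lemma sin_sqrt_identity {θ : ℝ} (hθ : θ ∈ Set.Ioo (0 : ℝ) Real.pi) :
    Real.sin θ * Real.sqrt ((1 + Real.cos θ) / (1 - Real.cos θ)) = 1 + Real.cos θ := by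
  obtain ⟨h0, hπ⟩ := hθ
  have hs2 : 0 < Real.sin (θ / 2) :=
    Real.sin_pos_of_pos_of_lt_pi (by linarith) (by linarith [Real.pi_pos])
  have hc2 : 0 < Real.cos (θ / 2) :=
    Real.cos_pos_of_mem_Ioo ⟨by linarith [Real.pi_pos], by linarith⟩
  have h1c : 1 + Real.cos θ = 2 * Real.cos (θ / 2) ^ 2 := by
    have := Real.cos_sq (θ / 2)
    rw [show 2 * (θ / 2) = θ by ring] at this
    linarith
  have h1c' : 1 - Real.cos θ = 2 * Real.sin (θ / 2) ^ 2 := by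
    have h := Real.sin_sq_add_cos_sq (θ / 2)
    nlinarith [h1c]
  have hsin : Real.sin θ = 2 * Real.sin (θ / 2) * Real.cos (θ / 2) := by
    rw [← Real.sin_two_mul]; ring_nf
  have hratio : (1 + Real.cos θ) / (1 - Real.cos θ)
      = (Real.cos (θ / 2) / Real.sin (θ / 2)) ^ 2 := by
    rw [h1c, h1c', div_pow]
    field_simp
  rw [hratio, Real.sqrt_sq (le_of_lt (div_pos hc2 hs2)), hsin, h1c]
  field_simp

lemma moment_eq (a b : ℝ → ℝ)
    (ha_per : ∀ θ : ℝ, a (θ + 2 * Real.pi) = a θ)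
    (ha_even : ∀ θ : ℝ, a (-θ) = a θ)
    (ha_int : IntervalIntegrable a volume 0 (2 * Real.pi))
    (hb_int : IntegrableOn b (Set.Icc (-1 : ℝ) 1))
    (hab : ∀ θ ∈ Set.Ioo (0 : ℝ) Real.pi,
      b (Real.cos θ) = a θ * Real.sqrt ((1 + Real.cos θ) / (1 - Real.cos θ)))
    (m : ℕ) :
    (1 / (2 * Real.pi)) * ∫ θ in (0 : ℝ)..(2 * Real.pi),
        a θ * ((1 + Real.cos θ) * (2 * Real.cos θ) ^ m)
      = (1 / Real.pi) * ∫ x in (-1 : ℝ)..1, b x * (2 * x) ^ m := by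
  have hπ := Real.pi_pos
  set F : ℝ → ℝ := fun θ => a θ * ((1 + Real.cos θ) * (2 * Real.cos θ) ^ m) with hF
  have hFint : IntervalIntegrable F volume 0 (2 * Real.pi) :=
    ha_int.mul_continuousOn (by fun_prop)
  have hFint1 : IntervalIntegrable F volume 0 Real.pi := by
    refine hFint.mono_set ?_
    rw [Set.uIcc_of_le (by linarith), Set.uIcc_of_le (by linarith)]
    exact Set.Icc_subset_Icc le_rfl (by linarith)
  have hFint2 : IntervalIntegrable F volume Real.pi (2 * Real.pi) := by
    refine hFint.mono_set ?_
    rw [Set.uIcc_of_le (by linarith), Set.uIcc_of_le (by linarith)]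
    exact Set.Icc_subset_Icc (by linarith) le_rfl
  -- symmetry: second half equals first half
  have hsymm : ∀ x : ℝ, F (2 * Real.pi - x) = F x := by
    intro x
    have hcos : Real.cos (2 * Real.pi - x) = Real.cos x := by
      rw [show 2 * Real.pi - x = -x + 2 * Real.pi by ring, Real.cos_add_two_pi, Real.cos_neg]
    have haa : a (2 * Real.pi - x) = a x := by
      rw [show 2 * Real.pi - x = -x + 2 * Real.pi by ring, ha_per, ha_even]
    simp only [hF, hcos, haa]
  have hhalf : ∫ θ in (0 : ℝ)..(2 * Real.pi), F θ = 2 * ∫ θ in (0 : ℝ)..Real.pi, F θ := by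
    rw [← intervalIntegral.integral_add_adjacent_intervals hFint1 hFint2]
    have h1 : ∫ x in (0 : ℝ)..Real.pi, F (2 * Real.pi - x)
        = ∫ x in (2 * Real.pi - Real.pi)..(2 * Real.pi - 0), F x :=
      intervalIntegral.integral_comp_sub_left F (2 * Real.pi)
    simp only [hsymm] at h1
    rw [show 2 * Real.pi - Real.pi = Real.pi by ring, sub_zero] at h1
    rw [← h1]
    ring
  -- reduce both sides to the open-interval integral
  have hθside : ∫ θ in (0 : ℝ)..Real.pi, F θ = ∫ θ in Set.Ioo (0 : ℝ) Real.pi, F θ := by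
    rw [intervalIntegral.integral_of_le (by linarith), integral_Ioc_eq_integral_Ioo]
  -- substitution on the x side
  set g : ℝ → ℝ := fun x => b x * (2 * x) ^ m with hg
  have himg : Real.cos '' Set.Icc 0 Real.pi = Set.Icc (-1 : ℝ) 1 := by
    apply Set.eq_of_subset_of_subset
    · rintro y ⟨x, -, rfl⟩
      exact ⟨Real.neg_one_le_cos x, Real.cos_le_one x⟩
    · exact Real.surjOn_cos
  have hsub : ∫ x in Set.Icc (-1 : ℝ) 1, g x
      = ∫ θ in Set.Icc (0 : ℝ) Real.pi, |(-Real.sin θ)| • g (Real.cos θ) := by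
    rw [← himg]
    exact integral_image_eq_integral_abs_deriv_smul measurableSet_Icc
      (fun x _ => (Real.hasDerivAt_cos x).hasDerivWithinAt) Real.injOn_cos g
  have hxside : ∫ x in (-1 : ℝ)..1, g x
      = ∫ θ in Set.Ioo (0 : ℝ) Real.pi, |(-Real.sin θ)| • g (Real.cos θ) := by
    rw [intervalIntegral.integral_of_le (by norm_num), ← integral_Icc_eq_integral_Ioc, hsub,
      integral_Icc_eq_integral_Ioc, integral_Ioc_eq_integral_Ioo]
  have hcongr : ∀ θ ∈ Set.Ioo (0 : ℝ) Real.pi, |(-Real.sin θ)| • g (Real.cos θ) = F θ := by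
    intro θ hθ
    obtain ⟨h0, hπ'⟩ := hθ
    have hsinpos : 0 < Real.sin θ := Real.sin_pos_of_pos_of_lt_pi h0 hπ'
    have habs : |(-Real.sin θ)| = Real.sin θ := by
      rw [abs_neg, abs_of_pos hsinpos]
    rw [habs, smul_eq_mul]
    simp only [hg, hF]
    rw [hab θ ⟨h0, hπ'⟩]
    have := sin_sqrt_identity ⟨h0, hπ'⟩
    linear_combination (a θ * (2 * Real.cos θ) ^ m) * this
  have hIoo : ∫ θ in Set.Ioo (0 : ℝ) Real.pi, |(-Real.sin θ)| • g (Real.cos θ)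
      = ∫ θ in Set.Ioo (0 : ℝ) Real.pi, F θ :=
    setIntegral_congr_fun measurableSet_Ioo hcongr
  rw [hhalf, hθside, ← hIoo, ← hxside]
  field_simp

/-- Toeplitz+Hankel to Hankel determinant identity: for an even integrable function a
    on the unit circle and b(cos θ) = a(e^{iθ})√((1+cos θ)/(1-cos θ)) integrable on
    [-1,1], one has det(T_n(a)+H_n(a)) = det H_n[b]. -/
theorem stmt9 (n : ℕ) (a b : ℝ → ℝ)
    (ha_per : ∀ θ : ℝ, a (θ + 2 * Real.pi) = a θ)
    (ha_even : ∀ θ : ℝ, a (-θ) = a θ)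
    (ha_int : IntervalIntegrable a volume 0 (2 * Real.pi))
    (hb_int : IntegrableOn b (Set.Icc (-1 : ℝ) 1))
    (hab : ∀ θ ∈ Set.Ioo (0 : ℝ) Real.pi,
      b (Real.cos θ) = a θ * Real.sqrt ((1 + Real.cos θ) / (1 - Real.cos θ))) :
    Matrix.det (Matrix.of fun j k : Fin n =>
        ((1 / (2 * Real.pi)) *
            ∫ θ in (0 : ℝ)..(2 * Real.pi), a θ * Real.cos ((((j : ℕ) : ℝ) - ((k : ℕ) : ℝ)) * θ)) +
        ((1 / (2 * Real.pi)) *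
            ∫ θ in (0 : ℝ)..(2 * Real.pi), a θ * Real.cos ((((j : ℕ) + (k : ℕ) + 1 : ℕ) : ℝ) * θ))) =
    Matrix.det (Matrix.of fun j k : Fin n =>
        (1 / Real.pi) * ∫ x in (-1 : ℝ)..1, b x * (2 * x) ^ ((j : ℕ) + (k : ℕ))) := by
  classical
  set L : Matrix (Fin n) (Fin n) ℝ :=
    Matrix.of fun j i : Fin n => (myV (j : ℕ)).coeff (i : ℕ) / 2 ^ (i : ℕ) with hL
  set G : Matrix (Fin n) (Fin n) ℝ :=
    Matrix.of fun i l : Fin n => (1 / (2 * Real.pi)) *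
      ∫ θ in (0 : ℝ)..(2 * Real.pi),
        a θ * ((1 + Real.cos θ) * (2 * Real.cos θ) ^ ((i : ℕ) + (l : ℕ))) with hG
  have hIntc : ∀ c : ℝ,
      IntervalIntegrable (fun θ => a θ * Real.cos (c * θ)) volume 0 (2 * Real.pi) :=
    fun c => ha_int.mul_continuousOn (by fun_prop)
  have hIntm : ∀ m : ℕ,
      IntervalIntegrable (fun θ => a θ * ((1 + Real.cos θ) * (2 * Real.cos θ) ^ m))
        volume 0 (2 * Real.pi) :=
    fun m => ha_int.mul_continuousOn (by fun_prop)
  have hM : (Matrix.of fun j k : Fin n =>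
      ((1 / (2 * Real.pi)) *
          ∫ θ in (0 : ℝ)..(2 * Real.pi), a θ * Real.cos ((((j : ℕ) : ℝ) - ((k : ℕ) : ℝ)) * θ)) +
      ((1 / (2 * Real.pi)) *
          ∫ θ in (0 : ℝ)..(2 * Real.pi), a θ * Real.cos ((((j : ℕ) + (k : ℕ) + 1 : ℕ) : ℝ) * θ)))
      = L * G * Lᵀ := by
    ext j k
    have e2 : ∀ θ : ℝ,
        a θ * Real.cos ((((j : ℕ) : ℝ) - ((k : ℕ) : ℝ)) * θ)
          + a θ * Real.cos ((((j : ℕ) + (k : ℕ) + 1 : ℕ) : ℝ) * θ)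
        = ∑ l : Fin n, ∑ i : Fin n, (L j i * L k l) *
            (a θ * ((1 + Real.cos θ) * (2 * Real.cos θ) ^ ((i : ℕ) + (l : ℕ)))) := by
      intro θ
      rw [← mul_add, key_identity j k θ, Finset.mul_sum]
      refine Finset.sum_congr rfl fun l _ => ?_
      rw [Finset.mul_sum]
      refine Finset.sum_congr rfl fun i _ => ?_
      simp only [hL, Matrix.of_apply]
      ring
    have step1 :
        (Matrix.of fun j k : Fin n =>
          ((1 / (2 * Real.pi)) *
              ∫ θ in (0 : ℝ)..(2 * Real.pi), a θ * Real.cos ((((j : ℕ) : ℝ) - ((k : ℕ) : ℝ)) * θ)) +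
          ((1 / (2 * Real.pi)) *
              ∫ θ in (0 : ℝ)..(2 * Real.pi),
                a θ * Real.cos ((((j : ℕ) + (k : ℕ) + 1 : ℕ) : ℝ) * θ))) j k
        = (1 / (2 * Real.pi)) * ∑ l : Fin n, ∑ i : Fin n, (L j i * L k l) *
            ∫ θ in (0 : ℝ)..(2 * Real.pi),
              a θ * ((1 + Real.cos θ) * (2 * Real.cos θ) ^ ((i : ℕ) + (l : ℕ))) := by
      rw [Matrix.of_apply, ← mul_add, ← intervalIntegral.integral_add (hIntc _) (hIntc _)]
      congr 1
      calc
        ∫ θ in (0 : ℝ)..(2 * Real.pi),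
            (a θ * Real.cos ((((j : ℕ) : ℝ) - ((k : ℕ) : ℝ)) * θ)
              + a θ * Real.cos ((((j : ℕ) + (k : ℕ) + 1 : ℕ) : ℝ) * θ))
          = ∫ θ in (0 : ℝ)..(2 * Real.pi), ∑ l : Fin n, ∑ i : Fin n, (L j i * L k l) *
              (a θ * ((1 + Real.cos θ) * (2 * Real.cos θ) ^ ((i : ℕ) + (l : ℕ)))) := by
            simp_rw [e2]
        _ = ∑ l : Fin n, ∑ i : Fin n, (L j i * L k l) *
              ∫ θ in (0 : ℝ)..(2 * Real.pi),
                a θ * ((1 + Real.cos θ) * (2 * Real.cos θ) ^ ((i : ℕ) + (l : ℕ))) := by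
            exact double_swap 0 (2 * Real.pi) _ _ (fun i l => hIntm _)
    rw [step1, Matrix.mul_apply]
    rw [Finset.mul_sum]
    refine Finset.sum_congr rfl fun l _ => ?_
    rw [Matrix.mul_apply, Matrix.transpose_apply, Finset.sum_mul, Finset.mul_sum]
    refine Finset.sum_congr rfl fun i _ => ?_
    rw [hG]
    simp only [Matrix.of_apply]
    ring
  have hLdet : L.det = 1 := by
    have htri : L.BlockTriangular OrderDual.toDual := by
      intro i j hij
      have hij' : (i : ℕ) < (j : ℕ) := hij
      simp only [hL, Matrix.of_apply]
      rw [Polynomial.coeff_eq_zero_of_natDegree_lt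
        (lt_of_le_of_lt (myV_natDegree_le _) hij'), zero_div]
    rw [Matrix.det_of_lowerTriangular L htri]
    refine Finset.prod_eq_one fun i _ => ?_
    simp only [hL, Matrix.of_apply, myV_coeff_self]
    exact div_self (by positivity)
  have hGR : G = (Matrix.of fun j k : Fin n =>
      (1 / Real.pi) * ∫ x in (-1 : ℝ)..1, b x * (2 * x) ^ ((j : ℕ) + (k : ℕ))) := by
    ext i l
    simp only [hG, Matrix.of_apply]
    exact moment_eq a b ha_per ha_even ha_int hb_int hab ((i : ℕ) + (l : ℕ))
  rw [hM, Matrix.det_mul, Matrix.det_mul, Matrix.det_transpose, hLdet, hGR]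
  ring
end

section
/- Let K: ℝ → ℝ be continuously differentiable with bounded derivative on compact sets, and fix α > 0. Define A_n = ((α/n)K(α(j-k)/n) + (α/n)K(α(j+k+1)/n))_{j,k=0}^{n-1} and B_n = ((α/n)∫₀¹∫₀¹ [K(α(j-k+ξ-η)/n) + K(α(j+k+ξ+η)/n)] dξ dη)_{j,k=0}^{n-1}. Then each entry of A_n - B_n is O(n⁻²) uniformly in j,k, and hence the Hilbert-Schmidt (Frobenius) norm of A_n - B_n is O(n⁻¹). -/
/-- Key entrywise estimate, extracted as an auxiliary lemma. -/
lemma stmt13_key (K : ℝ → ℝ) (hKc : Continuous K) (α : ℝ) (hα : 0 < α)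
    (L' : ℝ) (hL'0 : 0 ≤ L')
    (hlip : ∀ x ∈ Set.Icc (-(2*α)) (2*α), ∀ y ∈ Set.Icc (-(2*α)) (2*α),
      |K x - K y| ≤ L' * |x - y|)
    (n : ℕ) (hn : 0 < n) (j k : Fin n) :
    |(α / n) * (K (α * (((j : ℕ) : ℝ) - ((k : ℕ) : ℝ)) / n) +
          K (α * (((j : ℕ) : ℝ) + ((k : ℕ) : ℝ) + 1) / n)) -
      (α / n) * ∫ ξ in (0 : ℝ)..1, ∫ η in (0 : ℝ)..1,
          (K (α * (((j : ℕ) : ℝ) - ((k : ℕ) : ℝ) + ξ - η) / n) +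
            K (α * (((j : ℕ) : ℝ) + ((k : ℕ) : ℝ) + ξ + η) / n))|
      ≤ (2 * L' * α ^ 2) / (n : ℝ) ^ 2 := by
  have hm : (0:ℝ) < n := by exact_mod_cast hn
  have hm1 : (1:ℝ) ≤ n := by exact_mod_cast hn
  set m : ℝ := (n:ℝ) with hmdef
  set d : ℝ := ((j : ℕ) : ℝ) - ((k : ℕ) : ℝ) with hddef
  set s : ℝ := ((j : ℕ) : ℝ) + ((k : ℕ) : ℝ) with hsdef
  have hj0 : (0:ℝ) ≤ ((j : ℕ) : ℝ) := Nat.cast_nonneg _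
  have hk0 : (0:ℝ) ≤ ((k : ℕ) : ℝ) := Nat.cast_nonneg _
  have hj1 : ((j : ℕ) : ℝ) ≤ m - 1 := by
    have h := Nat.cast_le (α := ℝ) |>.mpr (Nat.succ_le_of_lt j.isLt)
    push_cast at h; linarith
  have hk1 : ((k : ℕ) : ℝ) ≤ m - 1 := by
    have h := Nat.cast_le (α := ℝ) |>.mpr (Nat.succ_le_of_lt k.isLt)
    push_cast at h; linarith
  have hd1 : -(m-1) ≤ d := by rw [hddef]; linarith
  have hd2 : d ≤ m - 1 := by rw [hddef]; linarith
  have hs1 : 0 ≤ s := by rw [hsdef]; linarith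
  have hs2 : s ≤ 2*m - 2 := by rw [hsdef]; linarith
  -- scaled arguments lie in the compact interval
  have memI : ∀ x : ℝ, |x| ≤ 2*m → α*x/m ∈ Set.Icc (-(2*α)) (2*α) := by
    intro x hx
    have h1 : |α*x/m| ≤ 2*α := by
      rw [abs_div, abs_mul, abs_of_pos hα, abs_of_pos hm, div_le_iff₀ hm]
      nlinarith [abs_nonneg x]
    have h2 := abs_le.mp h1
    exact ⟨h2.1, h2.2⟩
  have lipS : ∀ x y : ℝ, |x| ≤ 2*m → |y| ≤ 2*m →
      |K (α*x/m) - K (α*y/m)| ≤ L'*α*|x-y|/m := by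
    intro x y hx hy
    calc |K (α*x/m) - K (α*y/m)| ≤ L' * |α*x/m - α*y/m| := hlip _ (memI x hx) _ (memI y hy)
      _ = L'*α*|x-y|/m := by
          rw [show α*x/m - α*y/m = α*(x-y)/m by ring, abs_div, abs_mul,
            abs_of_pos hα, abs_of_pos hm]; ring
  -- pointwise estimate on the integrand
  have hpt : ∀ ξ ∈ Set.Icc (0:ℝ) 1, ∀ η ∈ Set.Icc (0:ℝ) 1,
      |(K (α*(d+ξ-η)/m) + K (α*(s+ξ+η)/m)) - (K (α*d/m) + K (α*(s+1)/m))|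
        ≤ 2*L'*α/m := by
    intro ξ hξ η hη
    obtain ⟨hξ0, hξ1⟩ := hξ; obtain ⟨hη0, hη1⟩ := hη
    have h1 := lipS (d+ξ-η) d
      (abs_le.mpr ⟨by linarith, by linarith⟩) (abs_le.mpr ⟨by linarith, by linarith⟩)
    have h2 := lipS (s+ξ+η) (s+1)
      (abs_le.mpr ⟨by linarith, by linarith⟩) (abs_le.mpr ⟨by linarith, by linarith⟩)
    have e1 : |d+ξ-η - d| ≤ 1 := by
      rw [show d+ξ-η-d = ξ-η by ring]; exact abs_le.mpr ⟨by linarith, by linarith⟩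
    have e2 : |s+ξ+η - (s+1)| ≤ 1 := by
      rw [show s+ξ+η-(s+1) = ξ+η-1 by ring]; exact abs_le.mpr ⟨by linarith, by linarith⟩
    have b1 : |K (α*(d+ξ-η)/m) - K (α*d/m)| ≤ L'*α/m := by
      refine h1.trans ?_
      rw [div_le_div_iff₀ hm hm]
      nlinarith [mul_nonneg (mul_nonneg (mul_nonneg hL'0 hα.le) (sub_nonneg.mpr e1)) hm.le]
    have b2 : |K (α*(s+ξ+η)/m) - K (α*(s+1)/m)| ≤ L'*α/m := by
      refine h2.trans ?_
      rw [div_le_div_iff₀ hm hm]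
      nlinarith [mul_nonneg (mul_nonneg (mul_nonneg hL'0 hα.le) (sub_nonneg.mpr e2)) hm.le]
    calc |(K (α*(d+ξ-η)/m) + K (α*(s+ξ+η)/m)) - (K (α*d/m) + K (α*(s+1)/m))|
        = |(K (α*(d+ξ-η)/m) - K (α*d/m)) + (K (α*(s+ξ+η)/m) - K (α*(s+1)/m))| := by
          ring_nf
      _ ≤ |K (α*(d+ξ-η)/m) - K (α*d/m)| + |K (α*(s+ξ+η)/m) - K (α*(s+1)/m)| := abs_add_le _ _
      _ ≤ L'*α/m + L'*α/m := add_le_add b1 b2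
      _ = 2*L'*α/m := by ring
  -- continuity facts
  have hcontg : ∀ ξ : ℝ, Continuous (fun η => K (α*(d+ξ-η)/m) + K (α*(s+ξ+η)/m)) := by
    intro ξ; fun_prop
  have hcontF : Continuous (fun ξ => ∫ η in (0:ℝ)..1,
      (K (α*(d+ξ-η)/m) + K (α*(s+ξ+η)/m))) := by
    apply intervalIntegral.continuous_parametric_intervalIntegral_of_continuous'
    fun_prop
  -- inner integral estimate
  have stepA : ∀ ξ ∈ Set.Icc (0:ℝ) 1,
      |(∫ η in (0:ℝ)..1, (K (α*(d+ξ-η)/m) + K (α*(s+ξ+η)/m)))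
        - (K (α*d/m) + K (α*(s+1)/m))| ≤ 2*L'*α/m := by
    intro ξ hξ
    have hi : IntervalIntegrable (fun η => K (α*(d+ξ-η)/m) + K (α*(s+ξ+η)/m))
        MeasureTheory.volume 0 1 := (hcontg ξ).intervalIntegrable _ _
    have e : (∫ η in (0:ℝ)..1, (K (α*(d+ξ-η)/m) + K (α*(s+ξ+η)/m)))
        - (K (α*d/m) + K (α*(s+1)/m))
        = ∫ η in (0:ℝ)..1,
            ((K (α*(d+ξ-η)/m) + K (α*(s+ξ+η)/m)) - (K (α*d/m) + K (α*(s+1)/m))) := by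
      rw [intervalIntegral.integral_sub hi intervalIntegrable_const,
        intervalIntegral.integral_const]
      simp
    rw [e]
    have hb : ∀ η ∈ Set.uIoc (0:ℝ) 1,
        ‖(K (α*(d+ξ-η)/m) + K (α*(s+ξ+η)/m)) - (K (α*d/m) + K (α*(s+1)/m))‖
          ≤ 2*L'*α/m := by
      intro η hη
      rw [Set.uIoc_of_le zero_le_one] at hη
      exact (by simpa [Real.norm_eq_abs] using hpt ξ hξ η ⟨le_of_lt hη.1, hη.2⟩)
    have := intervalIntegral.norm_integral_le_of_norm_le_const hb
    simpa [Real.norm_eq_abs] using this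
  -- outer integral estimate
  have stepB :
      |(∫ ξ in (0:ℝ)..1, ∫ η in (0:ℝ)..1, (K (α*(d+ξ-η)/m) + K (α*(s+ξ+η)/m)))
        - (K (α*d/m) + K (α*(s+1)/m))| ≤ 2*L'*α/m := by
    have hi : IntervalIntegrable (fun ξ => ∫ η in (0:ℝ)..1,
        (K (α*(d+ξ-η)/m) + K (α*(s+ξ+η)/m))) MeasureTheory.volume 0 1 :=
      hcontF.intervalIntegrable _ _
    have e : (∫ ξ in (0:ℝ)..1, ∫ η in (0:ℝ)..1, (K (α*(d+ξ-η)/m) + K (α*(s+ξ+η)/m)))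
        - (K (α*d/m) + K (α*(s+1)/m))
        = ∫ ξ in (0:ℝ)..1,
            ((∫ η in (0:ℝ)..1, (K (α*(d+ξ-η)/m) + K (α*(s+ξ+η)/m)))
              - (K (α*d/m) + K (α*(s+1)/m))) := by
      rw [intervalIntegral.integral_sub hi intervalIntegrable_const,
        intervalIntegral.integral_const]
      simp
    rw [e]
    have hb : ∀ ξ ∈ Set.uIoc (0:ℝ) 1,
        ‖(∫ η in (0:ℝ)..1, (K (α*(d+ξ-η)/m) + K (α*(s+ξ+η)/m)))
          - (K (α*d/m) + K (α*(s+1)/m))‖ ≤ 2*L'*α/m := by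
      intro ξ hξ
      rw [Set.uIoc_of_le zero_le_one] at hξ
      exact (by simpa [Real.norm_eq_abs] using stepA ξ ⟨le_of_lt hξ.1, hξ.2⟩)
    have := intervalIntegral.norm_integral_le_of_norm_le_const hb
    simpa [Real.norm_eq_abs] using this
  -- conclude
  have goal_eq : (α / m) * (K (α * d / m) + K (α * (s + 1) / m)) -
      (α / m) * ∫ ξ in (0:ℝ)..1, ∫ η in (0:ℝ)..1,
        (K (α * (d + ξ - η) / m) + K (α * (s + ξ + η) / m))
      = (α / m) * ((K (α*d/m) + K (α*(s+1)/m))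
        - ∫ ξ in (0:ℝ)..1, ∫ η in (0:ℝ)..1,
            (K (α*(d+ξ-η)/m) + K (α*(s+ξ+η)/m))) := by ring
  rw [goal_eq, abs_mul, abs_of_pos (div_pos hα hm), abs_sub_comm]
  calc (α / m) * |(∫ ξ in (0:ℝ)..1, ∫ η in (0:ℝ)..1,
          (K (α*(d+ξ-η)/m) + K (α*(s+ξ+η)/m)))
        - (K (α*d/m) + K (α*(s+1)/m))|
      ≤ (α / m) * (2*L'*α/m) :=
        mul_le_mul_of_nonneg_left stepB (le_of_lt (div_pos hα hm))
    _ = (2 * L' * α ^ 2) / m ^ 2 := by field_simp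

/-- For K continuously differentiable and α > 0, the entries of A_n - B_n (point-value
    vs. cell-averaged discretization of the kernel K(x-y)+K(x+y)) are O(n⁻²) uniformly,
    and hence the Hilbert-Schmidt (Frobenius) norm of A_n - B_n is O(n⁻¹). -/
theorem stmt13 (K : ℝ → ℝ) (hK : ContDiff ℝ 1 K) (α : ℝ) (hα : 0 < α) :
    ∃ C : ℝ, ∀ n : ℕ, 0 < n →
      (∀ j k : Fin n,
        |(α / n) * (K (α * (((j : ℕ) : ℝ) - ((k : ℕ) : ℝ)) / n) +
              K (α * (((j : ℕ) : ℝ) + ((k : ℕ) : ℝ) + 1) / n)) -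
          (α / n) * ∫ ξ in (0 : ℝ)..1, ∫ η in (0 : ℝ)..1,
              (K (α * (((j : ℕ) : ℝ) - ((k : ℕ) : ℝ) + ξ - η) / n) +
                K (α * (((j : ℕ) : ℝ) + ((k : ℕ) : ℝ) + ξ + η) / n))|
          ≤ C / (n : ℝ) ^ 2) ∧
      Real.sqrt (∑ j : Fin n, ∑ k : Fin n,
        ((α / n) * (K (α * (((j : ℕ) : ℝ) - ((k : ℕ) : ℝ)) / n) +
              K (α * (((j : ℕ) : ℝ) + ((k : ℕ) : ℝ) + 1) / n)) -
          (α / n) * ∫ ξ in (0 : ℝ)..1, ∫ η in (0 : ℝ)..1,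
              (K (α * (((j : ℕ) : ℝ) - ((k : ℕ) : ℝ) + ξ - η) / n) +
                K (α * (((j : ℕ) : ℝ) + ((k : ℕ) : ℝ) + ξ + η) / n))) ^ 2)
        ≤ C / n := by
  obtain ⟨L, hL⟩ := (isCompact_Icc (a := -(2*α)) (b := 2*α)).exists_bound_of_continuousOn
    ((hK.continuous_deriv le_rfl).continuousOn)
  have hL'0 : 0 ≤ max L 0 := le_max_right _ _
  have hlip : ∀ x ∈ Set.Icc (-(2*α)) (2*α), ∀ y ∈ Set.Icc (-(2*α)) (2*α),
      |K x - K y| ≤ (max L 0) * |x - y| := by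
    intro x hx y hy
    have := (convex_Icc (-(2*α)) (2*α)).norm_image_sub_le_of_norm_deriv_le (C := max L 0)
      (fun z _ => (hK.differentiable one_ne_zero).differentiableAt)
      (fun z hz => (hL z hz).trans (le_max_left _ _)) hy hx
    simpa [Real.norm_eq_abs] using this
  refine ⟨2 * (max L 0) * α ^ 2, fun n hn => ?_⟩
  have hm : (0:ℝ) < n := by exact_mod_cast hn
  have key := stmt13_key K hK.continuous α hα (max L 0) hL'0 hlip n hn
  refine ⟨key, ?_⟩
  have hC : 0 ≤ 2 * (max L 0) * α ^ 2 := by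
    apply mul_nonneg (mul_nonneg (by norm_num) hL'0) (sq_nonneg α)
  have hsum : (∑ j : Fin n, ∑ k : Fin n,
      ((α / n) * (K (α * (((j : ℕ) : ℝ) - ((k : ℕ) : ℝ)) / n) +
            K (α * (((j : ℕ) : ℝ) + ((k : ℕ) : ℝ) + 1) / n)) -
        (α / n) * ∫ ξ in (0 : ℝ)..1, ∫ η in (0 : ℝ)..1,
            (K (α * (((j : ℕ) : ℝ) - ((k : ℕ) : ℝ) + ξ - η) / n) +
              K (α * (((j : ℕ) : ℝ) + ((k : ℕ) : ℝ) + ξ + η) / n))) ^ 2)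
      ≤ ((2 * (max L 0) * α ^ 2) / n) ^ 2 := by
    calc (∑ j : Fin n, ∑ k : Fin n,
        ((α / n) * (K (α * (((j : ℕ) : ℝ) - ((k : ℕ) : ℝ)) / n) +
              K (α * (((j : ℕ) : ℝ) + ((k : ℕ) : ℝ) + 1) / n)) -
          (α / n) * ∫ ξ in (0 : ℝ)..1, ∫ η in (0 : ℝ)..1,
              (K (α * (((j : ℕ) : ℝ) - ((k : ℕ) : ℝ) + ξ - η) / n) +
                K (α * (((j : ℕ) : ℝ) + ((k : ℕ) : ℝ) + ξ + η) / n))) ^ 2)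
        ≤ ∑ _j : Fin n, ∑ _k : Fin n, ((2 * (max L 0) * α ^ 2) / (n:ℝ) ^ 2) ^ 2 := by
          apply Finset.sum_le_sum; intro j _
          apply Finset.sum_le_sum; intro k _
          calc _ = |(α / n) * (K (α * (((j : ℕ) : ℝ) - ((k : ℕ) : ℝ)) / n) +
                  K (α * (((j : ℕ) : ℝ) + ((k : ℕ) : ℝ) + 1) / n)) -
                (α / n) * ∫ ξ in (0 : ℝ)..1, ∫ η in (0 : ℝ)..1,
                    (K (α * (((j : ℕ) : ℝ) - ((k : ℕ) : ℝ) + ξ - η) / n) +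
                      K (α * (((j : ℕ) : ℝ) + ((k : ℕ) : ℝ) + ξ + η) / n))| ^ 2 :=
                (sq_abs _).symm
            _ ≤ ((2 * (max L 0) * α ^ 2) / (n:ℝ) ^ 2) ^ 2 :=
                pow_le_pow_left₀ (abs_nonneg _) (key j k) 2
      _ = (n:ℝ)^2 * ((2 * (max L 0) * α ^ 2) / (n:ℝ) ^ 2) ^ 2 := by
          simp [Finset.sum_const, Finset.card_univ]; ring
      _ = ((2 * (max L 0) * α ^ 2) / n) ^ 2 := by field_simp
  calc Real.sqrt _ ≤ Real.sqrt (((2 * (max L 0) * α ^ 2) / n) ^ 2) := Real.sqrt_le_sqrt hsum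
    _ = (2 * (max L 0) * α ^ 2) / n := Real.sqrt_sq (div_nonneg hC hm.le)
end

section
/- The Riemann sum discretization of the sine-kernel operator converges: for fixed α > 0 and K(x) = sin(x)/(πx), the determinants of the n×n matrices I_n - A_n^±, where A_n^± = ((α/n)[K(α(j-k)/n) ± K(α(j+k+1)/n)])_{j,k=0}^{n-1}, converge as n → ∞ to the Fredholm determinant det(I - K_α^±) of the integral operator on L²[0,α] with kernel K(x-y) ± K(x+y). -/
open Filter MeasureTheory Set

/-- The Fredholm determinant det(I - T) of the integral operator on L²[0,α] with
    kernel `kern`, defined via the Fredholm series. -/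
noncomputable def fredholmDet (α : ℝ) (kern : ℝ → ℝ → ℝ) : ℝ :=
  ∑' m : ℕ, ((-1 : ℝ) ^ m / (m.factorial : ℝ)) *
    ∫ x : Fin m → ℝ in Set.univ.pi (fun _ => Set.Icc (0 : ℝ) α),
      Matrix.det (Matrix.of fun i j : Fin m => kern (x i) (x j))

/-- The sine kernel sin(x)/(πx), extended by 1/π at 0. -/
noncomputable def sineK (x : ℝ) : ℝ :=
  if x = 0 then 1 / Real.pi else Real.sin x / (Real.pi * x)



lemma sineK_int (z : ℝ) : sineK z = (1 / Real.pi) * ∫ t in (0:ℝ)..1, Real.cos (t * z) := by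
  by_cases hz : z = 0
  · subst hz
    simp [sineK]
  · have h : ∫ t in (0:ℝ)..1, Real.cos (t * z) = z⁻¹ • ∫ t in (0*z)..(1*z), Real.cos t :=
      intervalIntegral.integral_comp_mul_right Real.cos hz
    rw [sineK, if_neg hz, h]
    rw [integral_cos]
    simp only [zero_mul, one_mul, Real.sin_zero, smul_eq_mul]
    field_simp
    simp

lemma abs_cos_sub_cos (a b : ℝ) : |Real.cos a - Real.cos b| ≤ |a - b| := by
  rw [Real.cos_sub_cos]
  have h1 : |Real.sin ((a + b) / 2)| ≤ 1 := abs_le.mpr ⟨Real.neg_one_le_sin _, Real.sin_le_one _⟩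
  have h2 : |Real.sin ((a - b) / 2)| ≤ |(a - b) / 2| := Real.abs_sin_le_abs
  calc |(-2) * Real.sin ((a + b) / 2) * Real.sin ((a - b) / 2)|
      = 2 * |Real.sin ((a + b) / 2)| * |Real.sin ((a - b) / 2)| := by
        rw [abs_mul, abs_mul]; norm_num
    _ ≤ 2 * 1 * |(a - b) / 2| := by
        apply mul_le_mul _ h2 (abs_nonneg _) (by positivity)
        exact mul_le_mul_of_nonneg_left h1 (by norm_num)
    _ = |a - b| := by rw [abs_div, abs_two]; ring

lemma continuous_sineK : Continuous sineK := by
  have hlip : LipschitzWith 1 sineK := by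
    apply LipschitzWith.of_dist_le_mul
    intro u v
    rw [Real.dist_eq, Real.dist_eq, NNReal.coe_one, one_mul]
    rw [sineK_int u, sineK_int v, ← mul_sub]
    rw [← intervalIntegral.integral_sub
      (((by continuity : Continuous fun t : ℝ => Real.cos (t * u))).intervalIntegrable 0 1)
      (((by continuity : Continuous fun t : ℝ => Real.cos (t * v))).intervalIntegrable 0 1)]
    have hb : ∀ t ∈ Set.uIoc (0:ℝ) 1, ‖Real.cos (t * u) - Real.cos (t * v)‖ ≤ |u - v| := by
      intro t ht
      rw [Set.uIoc_of_le (by norm_num : (0:ℝ) ≤ 1)] at ht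
      rw [Real.norm_eq_abs]
      calc |Real.cos (t * u) - Real.cos (t * v)| ≤ |t * u - t * v| := abs_cos_sub_cos _ _
        _ = |t| * |u - v| := by rw [← mul_sub, abs_mul]
        _ ≤ 1 * |u - v| := by
            apply mul_le_mul_of_nonneg_right _ (abs_nonneg _)
            rw [abs_of_nonneg ht.1.le]
            exact ht.2
        _ = |u - v| := one_mul _
    have := intervalIntegral.norm_integral_le_of_norm_le_const hb
    rw [abs_mul]
    calc |1 / Real.pi| * |∫ t in (0:ℝ)..1, (Real.cos (t * u) - Real.cos (t * v))|
        ≤ 1 * (|u - v| * |1 - 0|) := by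
          apply mul_le_mul _ (by simpa [Real.norm_eq_abs] using this) (abs_nonneg _) zero_le_one
          rw [abs_of_nonneg (by positivity : (0:ℝ) ≤ 1 / Real.pi)]
          rw [div_le_one Real.pi_pos]
          linarith [Real.pi_gt_three]
      _ = |u - v| := by norm_num
  exact hlip.continuous

lemma exists_phi {ε : ℝ} (hε : ε = 1 ∨ ε = -1) :
    ∃ φ : ℝ → ℝ, Continuous φ ∧ (∀ u, |φ u| ≤ 1) ∧
      ∀ a b : ℝ, sineK (a - b) + ε * sineK (a + b)
        = (2 / Real.pi) * ∫ t in (0:ℝ)..1, φ (t * a) * φ (t * b) := by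
  have hint : ∀ c : ℝ, IntervalIntegrable (fun t => Real.cos (t * c)) volume 0 1 :=
    fun c => (Real.continuous_cos.comp (continuous_id.mul continuous_const)).intervalIntegrable 0 1
  rcases hε with rfl | rfl
  · refine ⟨Real.cos, Real.continuous_cos, fun u => Real.abs_cos_le_one u, fun a b => ?_⟩
    rw [sineK_int (a - b), sineK_int (a + b), one_mul]
    have : ∫ t in (0:ℝ)..1, Real.cos (t * a) * Real.cos (t * b)
        = ∫ t in (0:ℝ)..1, (Real.cos (t * (a - b)) + Real.cos (t * (a + b))) / 2 := by
      apply intervalIntegral.integral_congr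
      intro t _
      dsimp only
      rw [mul_sub, mul_add, Real.cos_sub, Real.cos_add]
      ring
    rw [this]
    rw [intervalIntegral.integral_div, intervalIntegral.integral_add (hint _) (hint _)]
    ring
  · refine ⟨Real.sin, Real.continuous_sin, fun u => abs_le.mpr
      ⟨Real.neg_one_le_sin _, Real.sin_le_one _⟩, fun a b => ?_⟩
    rw [sineK_int (a - b), sineK_int (a + b)]
    have : ∫ t in (0:ℝ)..1, Real.sin (t * a) * Real.sin (t * b)
        = ∫ t in (0:ℝ)..1, (Real.cos (t * (a - b)) - Real.cos (t * (a + b))) / 2 := by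
      apply intervalIntegral.integral_congr
      intro t _
      dsimp only
      rw [mul_sub, mul_add, Real.cos_sub, Real.cos_add]
      ring
    rw [this]
    rw [intervalIntegral.integral_div, intervalIntegral.integral_sub (hint _) (hint _)]
    ring

section GramBound
open Matrix

lemma gram_det_bound {m : ℕ} (φ : ℝ → ℝ) (hφc : Continuous φ) (hφ1 : ∀ u, |φ u| ≤ 1)
    (x : Fin m → ℝ) :
    |(Matrix.of fun i j : Fin m =>
        (2 / Real.pi) * ∫ t in (0:ℝ)..1, φ (t * x i) * φ (t * x j)).det|
      ≤ (2 / Real.pi) ^ m := by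
  classical
  set M : Matrix (Fin m) (Fin m) ℝ := Matrix.of fun i j : Fin m =>
      (2 / Real.pi) * ∫ t in (0:ℝ)..1, φ (t * x i) * φ (t * x j) with hM
  have hcont : ∀ c d : ℝ, Continuous fun t => φ (t * c) * φ (t * d) := by
    intro c d
    exact ((hφc.comp (continuous_id.mul continuous_const)).mul
      (hφc.comp (continuous_id.mul continuous_const)))
  have hint : ∀ c d : ℝ, IntervalIntegrable (fun t => φ (t * c) * φ (t * d)) volume 0 1 :=
    fun c d => (hcont c d).intervalIntegrable 0 1
  have hH : M.IsHermitian := by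
    show M.conjTranspose = M
    ext i j
    simp only [Matrix.conjTranspose_apply, hM, Matrix.of_apply, star_trivial]
    congr 1
    apply intervalIntegral.integral_congr
    intro t _
    dsimp only
    ring
  have hPSD : M.PosSemidef := by
    refine Matrix.posSemidef_iff_dotProduct_mulVec.2 ⟨hH, fun v => ?_⟩
    have h1 : star v ⬝ᵥ M *ᵥ v = ∑ i, ∑ j, v i * (M i j * v j) := by
      simp [dotProduct, Matrix.mulVec, Finset.mul_sum, star_trivial]
    have h2 : ∀ i j : Fin m, v i * (M i j * v j)
        = (2 / Real.pi) * ∫ t in (0:ℝ)..1, (v i * φ (t * x i)) * (v j * φ (t * x j)) := by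
      intro i j
      have : (fun t => (v i * φ (t * x i)) * (v j * φ (t * x j)))
          = fun t => (v i * v j) * (φ (t * x i) * φ (t * x j)) := funext fun t => by ring
      rw [this, intervalIntegral.integral_const_mul]
      show v i * (((2 / Real.pi) * ∫ t in (0:ℝ)..1, φ (t * x i) * φ (t * x j)) * v j) = _
      ring
    rw [h1]
    simp_rw [h2, ← Finset.mul_sum]
    have h3 : ∀ i : Fin m, ∑ j, ∫ t in (0:ℝ)..1, (v i * φ (t * x i)) * (v j * φ (t * x j))
        = ∫ t in (0:ℝ)..1, ∑ j, (v i * φ (t * x i)) * (v j * φ (t * x j)) := by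
      intro i
      rw [intervalIntegral.integral_finset_sum]
      intro j _
      exact ((continuous_const.mul (hφc.comp (continuous_id.mul continuous_const))).mul
        (continuous_const.mul (hφc.comp (continuous_id.mul continuous_const)))).intervalIntegrable 0 1
    simp_rw [h3]
    rw [← intervalIntegral.integral_finset_sum (f := fun i t =>
      ∑ j, (v i * φ (t * x i)) * (v j * φ (t * x j))) (fun i _ =>
      (Continuous.intervalIntegrable (continuous_finset_sum _ (fun j _ =>
        ((continuous_const.mul (hφc.comp (continuous_id.mul continuous_const))).mul
          (continuous_const.mul (hφc.comp (continuous_id.mul continuous_const)))))) 0 1))]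
    apply mul_nonneg (by positivity)
    apply intervalIntegral.integral_nonneg (by norm_num)
    intro u _
    have : ∑ i, ∑ j, (v i * φ (u * x i)) * (v j * φ (u * x j))
        = (∑ i, v i * φ (u * x i)) ^ 2 := by
      rw [sq, Finset.sum_mul_sum]
    rw [this]
    exact sq_nonneg _
  -- diagonal bound
  have hdiag : ∀ i, M i i ≤ 2 / Real.pi := by
    intro i
    have hb : ∫ t in (0:ℝ)..1, φ (t * x i) * φ (t * x i) ≤ 1 := by
      have h1 : ∫ t in (0:ℝ)..1, φ (t * x i) * φ (t * x i) ≤ ∫ t in (0:ℝ)..1, (1:ℝ) := by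
        apply intervalIntegral.integral_mono_on (by norm_num) (hint _ _)
          ((continuous_const (y := (1:ℝ))).intervalIntegrable 0 1)
        intro u _
        have := abs_le.1 (hφ1 (u * x i))
        nlinarith
      calc ∫ t in (0:ℝ)..1, φ (t * x i) * φ (t * x i) ≤ ∫ t in (0:ℝ)..1, (1:ℝ) := h1
        _ = 1 := by simp
    have : M i i = (2 / Real.pi) * ∫ t in (0:ℝ)..1, φ (t * x i) * φ (t * x i) := rfl
    rw [this]
    calc (2 / Real.pi) * ∫ t in (0:ℝ)..1, φ (t * x i) * φ (t * x i)
        ≤ (2 / Real.pi) * 1 := by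
          apply mul_le_mul_of_nonneg_left hb (by positivity)
      _ = 2 / Real.pi := mul_one _
  have htr : M.trace ≤ m * (2 / Real.pi) := by
    have : M.trace = ∑ i, M i i := rfl
    rw [this]
    calc ∑ i, M i i ≤ ∑ _i : Fin m, 2 / Real.pi := Finset.sum_le_sum fun i _ => hdiag i
      _ = m * (2 / Real.pi) := by
        rw [Finset.sum_const, Finset.card_univ, Fintype.card_fin, nsmul_eq_mul]
  -- trace = sum of eigenvalues
  have htr2 : M.trace = ∑ i, hH.eigenvalues i := by
    simpa using hH.trace_eq_sum_eigenvalues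
  have hdet : M.det = ∏ i, hH.eigenvalues i := by
    have := hH.det_eq_prod_eigenvalues
    simpa using this
  have hlam0 : ∀ i, 0 ≤ hH.eigenvalues i := fun i => hPSD.eigenvalues_nonneg i
  rcases Nat.eq_zero_or_pos m with rfl | hm
  · rw [show M.det = 1 from Matrix.det_fin_zero]
    norm_num
  · have hm0 : (m : ℝ) ≠ 0 := Nat.cast_ne_zero.2 hm.ne'
    have hsum : ∑ i, (m:ℝ)⁻¹ * hH.eigenvalues i ≤ 2 / Real.pi := by
      rw [← Finset.mul_sum, ← htr2]
      calc (m:ℝ)⁻¹ * M.trace ≤ (m:ℝ)⁻¹ * (m * (2 / Real.pi)) := by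
            apply mul_le_mul_of_nonneg_left htr (by positivity)
        _ = 2 / Real.pi := by field_simp
    have hAMGM := Real.geom_mean_le_arith_mean_weighted Finset.univ
      (fun _ : Fin m => (m:ℝ)⁻¹) hH.eigenvalues
      (fun i _ => by positivity)
      (by
        rw [Finset.sum_const, Finset.card_univ, Fintype.card_fin, nsmul_eq_mul]
        field_simp)
      (fun i _ => hlam0 i)
    set P := ∏ i, hH.eigenvalues i ^ ((m:ℝ)⁻¹) with hP
    have hPn : 0 ≤ P := Finset.prod_nonneg fun i _ => Real.rpow_nonneg (hlam0 i) _
    have hPm : P ^ m = ∏ i, hH.eigenvalues i := by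
      rw [hP, ← Finset.prod_pow]
      refine Finset.prod_congr rfl fun i _ => ?_
      rw [← Real.rpow_natCast (hH.eigenvalues i ^ ((m:ℝ)⁻¹)) m, ← Real.rpow_mul (hlam0 i),
        inv_mul_cancel₀ hm0, Real.rpow_one]
    have hfin : M.det ≤ (2 / Real.pi) ^ m := by
      rw [hdet, ← hPm]
      exact pow_le_pow_left₀ hPn (hAMGM.trans hsum) m
    have hnn : 0 ≤ M.det := by
      rw [hdet]
      exact Finset.prod_nonneg fun i _ => hlam0 i
    rw [abs_of_nonneg hnn]
    exact hfin

end GramBound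



variable {N : ℕ}

lemma det_block (s : Finset (Fin N)) (A : Matrix (Fin N) (Fin N) ℝ) :
    (Matrix.of (s.piecewise (fun i => A i) (fun i => (1 : Matrix (Fin N) (Fin N) ℝ) i))).det
      = (A.submatrix (Subtype.val : {x // x ∈ s} → Fin N) Subtype.val).det := by
  classical
  let e := Equiv.sumCompl (fun i : Fin N => i ∈ s)
  rw [← Matrix.det_submatrix_equiv_self e]
  have hblock : (Matrix.of (s.piecewise (fun i => A i)
        (fun i => (1 : Matrix (Fin N) (Fin N) ℝ) i))).submatrix e e
      = Matrix.fromBlocks (A.submatrix Subtype.val Subtype.val)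
          (A.submatrix Subtype.val Subtype.val) 0 1 := by
    ext i j
    cases i with
    | inl i =>
      cases j with
      | inl j =>
        simp [e, Matrix.submatrix_apply, Finset.piecewise_eq_of_mem _ _ _ i.2]
      | inr j =>
        simp [e, Matrix.submatrix_apply, Finset.piecewise_eq_of_mem _ _ _ i.2]
    | inr i =>
      cases j with
      | inl j =>
        have hne : (i : Fin N) ≠ (j : Fin N) := by
          intro h
          exact i.2 (h ▸ j.2)
        simp [e, Matrix.submatrix_apply, Finset.piecewise_eq_of_notMem _ _ _ i.2,
          Matrix.one_apply_ne hne]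
      | inr j =>
        by_cases h : i = j
        · subst h
          simp [e, Matrix.submatrix_apply, Finset.piecewise_eq_of_notMem _ _ _ i.2,
            Matrix.one_apply]
        · have hne : (i : Fin N) ≠ (j : Fin N) := fun hc => h (Subtype.ext hc)
          simp [e, Matrix.submatrix_apply, Finset.piecewise_eq_of_notMem _ _ _ i.2,
            Matrix.one_apply_ne hne, Matrix.one_apply, h, hne]
  rw [hblock, Matrix.det_fromBlocks_zero₂₁, Matrix.det_one, mul_one]

lemma det_eq_sum_subsets (A : Matrix (Fin N) (Fin N) ℝ) :
    (1 - A).det = ∑ s : Finset (Fin N), (-1 : ℝ) ^ s.card *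
      (A.submatrix (Subtype.val : {x // x ∈ s} → Fin N) Subtype.val).det := by
  classical
  have h1 : (1 - A) = Matrix.of ((fun i => - A i) + (fun i => (1 : Matrix (Fin N) (Fin N) ℝ) i)) := by
    ext i j
    simp [Matrix.sub_apply]
    ring
  rw [h1]
  have hdet : (Matrix.of ((fun i => - A i) + (fun i => (1 : Matrix (Fin N) (Fin N) ℝ) i))).det
      = (Matrix.detRowAlternating (R := ℝ) (n := Fin N)).toMultilinearMap
          ((fun i => - A i) + (fun i => (1 : Matrix (Fin N) (Fin N) ℝ) i)) := rfl
  rw [hdet, MultilinearMap.map_add_univ]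
  refine Finset.sum_congr rfl fun s _ => ?_
  have hpw : s.piecewise (fun i => - A i) (fun i => (1 : Matrix (Fin N) (Fin N) ℝ) i)
      = s.piecewise (fun i => (-1 : ℝ) • (s.piecewise (fun i => A i)
          (fun i => (1 : Matrix (Fin N) (Fin N) ℝ) i)) i)
        (s.piecewise (fun i => A i) (fun i => (1 : Matrix (Fin N) (Fin N) ℝ) i)) := by
    funext i
    by_cases hi : i ∈ s
    · simp [Finset.piecewise_eq_of_mem _ _ _ hi]
    · simp [Finset.piecewise_eq_of_notMem _ _ _ hi]
  rw [hpw, MultilinearMap.map_piecewise_smul]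
  have : (Matrix.detRowAlternating (R := ℝ) (n := Fin N)).toMultilinearMap
      (s.piecewise (fun i => A i) (fun i => (1 : Matrix (Fin N) (Fin N) ℝ) i))
      = (A.submatrix (Subtype.val : {x // x ∈ s} → Fin N) Subtype.val).det := det_block s A
  rw [this]
  simp [smul_eq_mul]

variable {N : ℕ}

lemma det_tuple_zero_of_not_inj {m : ℕ} (A : Matrix (Fin N) (Fin N) ℝ) {p : Fin m → Fin N}
    (hp : ¬ Function.Injective p) : (A.submatrix p p).det = 0 := by
  rw [Function.not_injective_iff] at hp
  obtain ⟨a, b, hab, hne⟩ := hp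
  exact Matrix.det_zero_of_row_eq hne (by
    funext j
    simp [Matrix.submatrix_apply, hab])

lemma orderEmb_congr {m : ℕ} {T s : Finset (Fin N)} (hT : T.card = m) (hs : s.card = m)
    (h : T = s) (a : Fin m) : ((T.orderIsoOfFin hT) a : Fin N) = ((s.orderIsoOfFin hs) a : Fin N) := by
  subst h; rfl

lemma tuple_sum {m : ℕ} (A : Matrix (Fin N) (Fin N) ℝ) :
    ∑ p : Fin m → Fin N, (A.submatrix p p).det
      = (m.factorial : ℝ) * ∑ s ∈ Finset.univ.filter (fun s : Finset (Fin N) => s.card = m),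
          (A.submatrix (Subtype.val : {x // x ∈ s} → Fin N) Subtype.val).det := by
  classical
  rw [← Finset.sum_filter_of_ne
    (p := fun p : Fin m → Fin N => Function.Injective p)
    (fun p _ hne => by
      by_contra hinj
      exact hne (det_tuple_zero_of_not_inj A hinj))]
  have hcard : ∀ {p : Fin m → Fin N}, Function.Injective p →
      (Finset.image p Finset.univ).card = m := by
    intro p hp
    rw [Finset.card_image_of_injective _ hp, Finset.card_univ, Fintype.card_fin]
  have hrhs : (m.factorial : ℝ) * ∑ s ∈ Finset.univ.filter (fun s : Finset (Fin N) => s.card = m),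
          (A.submatrix (Subtype.val : {x // x ∈ s} → Fin N) Subtype.val).det
      = ∑ s ∈ Finset.univ.filter (fun s : Finset (Fin N) => s.card = m),
          ∑ _σ : Equiv.Perm (Fin m),
            (A.submatrix (Subtype.val : {x // x ∈ s} → Fin N) Subtype.val).det := by
    rw [Finset.mul_sum]
    refine Finset.sum_congr rfl fun s _ => ?_
    rw [Finset.sum_const, Finset.card_univ, Fintype.card_perm, Fintype.card_fin,
      nsmul_eq_mul]
  rw [hrhs, ← Finset.sum_product']
  refine Finset.sum_bij'
    (i := fun p hp => (Finset.image p Finset.univ,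
      Equiv.ofBijective
        (fun a => ((Finset.image p Finset.univ).orderIsoOfFin
            (hcard (Finset.mem_filter.1 hp).2)).symm
          ⟨p a, Finset.mem_image_of_mem p (Finset.mem_univ a)⟩)
        (by
          have hp' := (Finset.mem_filter.1 hp).2
          refine (Finite.injective_iff_bijective).1 ?_
          intro a b hab
          apply hp'
          have := congrArg (fun y => ((((Finset.image p Finset.univ).orderIsoOfFin
            (hcard hp')) y : {x // x ∈ Finset.image p Finset.univ}) : Fin N)) hab
          simpa using this)))
    (j := fun x hx => fun a =>
      ((x.1.orderIsoOfFin ((Finset.mem_filter.1 (Finset.mem_product.1 hx).1).2)) (x.2 a) : Fin N))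
    ?_ ?_ ?_ ?_ ?_
  · -- i maps into the product
    intro p hp
    rw [Finset.mem_product]
    exact ⟨Finset.mem_filter.2 ⟨Finset.mem_univ _, hcard (Finset.mem_filter.1 hp).2⟩,
      Finset.mem_univ _⟩
  · -- j maps into injective functions
    intro x hx
    refine Finset.mem_filter.2 ⟨Finset.mem_univ _, ?_⟩
    intro a b hab
    exact x.2.injective ((x.1.orderIsoOfFin _).injective (Subtype.ext hab))
  · -- j (i p) = p
    intro p hp
    funext a
    simp
  · -- i (j x) = x
    intro x hx
    obtain ⟨s, σ⟩ := x
    have hx1 := (Finset.mem_filter.1 (Finset.mem_product.1 hx).1).2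
    set f : Fin m → Fin N := fun a => ((s.orderIsoOfFin hx1) (σ a) : Fin N) with hf
    have hfinj : Function.Injective f := fun a b hab =>
      σ.injective ((s.orderIsoOfFin hx1).injective (Subtype.ext hab))
    have himg : Finset.image f Finset.univ = s := by
      apply Finset.eq_of_subset_of_card_le
      · intro y hy
        simp only [Finset.mem_image] at hy
        obtain ⟨a, _, rfl⟩ := hy
        exact ((s.orderIsoOfFin hx1) (σ a)).2
      · rw [hx1, Finset.card_image_of_injective _ hfinj, Finset.card_univ, Fintype.card_fin]
    have hcard' : (Finset.image f Finset.univ).card = m := hcard hfinj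
    refine Prod.ext himg ?_
    · simp only
      apply Equiv.ext
      intro a
      apply ((Finset.image f Finset.univ).orderIsoOfFin hcard').injective
      apply Subtype.ext
      simp only [Equiv.ofBijective_apply, OrderIso.apply_symm_apply]
      erw [OrderIso.apply_symm_apply]
      rw [orderEmb_congr hcard' hx1 himg]
  · -- values agree
    intro p hp
    have hp' := (Finset.mem_filter.1 hp).2
    set s' := Finset.image p Finset.univ with hs'
    set oI := s'.orderIsoOfFin (hcard hp') with hoI
    set σp : Equiv.Perm (Fin m) := Equiv.ofBijective
        (fun a => oI.symm ⟨p a, Finset.mem_image_of_mem p (Finset.mem_univ a)⟩)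
        (by
          refine (Finite.injective_iff_bijective).1 ?_
          intro a b hab
          apply hp'
          have := congrArg (fun y => ((oI y : {x // x ∈ s'}) : Fin N)) hab
          simpa using this) with hσp
    show (A.submatrix p p).det
      = (A.submatrix (Subtype.val : {x // x ∈ s'} → Fin N) Subtype.val).det
  -- use the equiv
    have hE : A.submatrix p p
        = (A.submatrix (Subtype.val : {x // x ∈ s'} → Fin N) Subtype.val).submatrix
            (fun a => oI (σp a)) (fun a => oI (σp a)) := by
      ext a b
      simp [Matrix.submatrix_apply, hσp, Equiv.ofBijective_apply]
    rw [hE]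
    exact Matrix.det_submatrix_equiv_self (σp.trans oI.toEquiv) _


variable {N : ℕ}

lemma det_one_sub_eq_tsum (A : Matrix (Fin N) (Fin N) ℝ) :
    (1 - A).det = ∑' m : ℕ, ((-1 : ℝ) ^ m / (m.factorial : ℝ)) *
      ∑ p : Fin m → Fin N, (A.submatrix p p).det := by
  classical
  rw [tsum_eq_sum (s := Finset.range (N + 1)) (fun m hm => by
    rw [Finset.mem_range, not_lt] at hm
    have : ∀ p : Fin m → Fin N, (A.submatrix p p).det = 0 := by
      intro p
      apply det_tuple_zero_of_not_inj
      intro hinj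
      have := Fintype.card_le_of_injective p hinj
      simp only [Fintype.card_fin] at this
      omega
    simp [this])]
  have : ∀ m ∈ Finset.range (N + 1),
      ((-1 : ℝ) ^ m / (m.factorial : ℝ)) * ∑ p : Fin m → Fin N, (A.submatrix p p).det
      = ∑ s ∈ Finset.univ.filter (fun s : Finset (Fin N) => s.card = m),
          (-1 : ℝ) ^ s.card *
            (A.submatrix (Subtype.val : {x // x ∈ s} → Fin N) Subtype.val).det := by
    intro m _
    rw [tuple_sum]
    rw [← mul_assoc, div_mul_cancel₀, Finset.mul_sum]
    · refine Finset.sum_congr rfl fun s hs => ?_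
      rw [(Finset.mem_filter.1 hs).2]
    · exact_mod_cast Nat.factorial_ne_zero m
  rw [Finset.sum_congr rfl this]
  rw [Finset.sum_fiberwise_of_maps_to (fun s _ => by
    rw [Finset.mem_range, Nat.lt_succ_iff]
    exact (Finset.card_le_univ s).trans (by simp))]
  exact det_eq_sum_subsets A


lemma riemann {α : ℝ} (hα : 0 < α) (m : ℕ) {f : (Fin m → ℝ) → ℝ} (hf : Continuous f) :
    Filter.Tendsto (fun n : ℕ => (α / n) ^ m * ∑ p : Fin m → Fin n,
        f (fun a => α * (((p a : ℕ) : ℝ) + 1/2) / n))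
      atTop (nhds (∫ x in Set.univ.pi (fun _ : Fin m => Icc (0:ℝ) α), f x)) := by
  classical
  set K : Set (Fin m → ℝ) := Set.univ.pi (fun _ : Fin m => Icc (0:ℝ) α) with hK
  have hKc : IsCompact K := isCompact_univ_pi (fun _ => isCompact_Icc)
  have hKm : MeasurableSet K := MeasurableSet.univ_pi (fun _ => measurableSet_Icc)
  have hInt : IntegrableOn f K volume := hf.continuousOn.integrableOn_compact hKc
  have hUC : UniformContinuousOn f K := hKc.uniformContinuousOn_of_continuous hf.continuousOn
  rw [Metric.tendsto_atTop]
  intro ε hε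
  set ε' := ε / (2 * (α ^ m + 1)) with hε'def
  have hε' : 0 < ε' := by positivity
  obtain ⟨δ, hδ, hδf⟩ := Metric.uniformContinuousOn_iff.1 hUC ε' hε'
  obtain ⟨N₀, hN₀⟩ := exists_nat_gt (α / δ)
  refine ⟨max N₀ 1, fun n hn => ?_⟩
  have hn1 : 1 ≤ n := le_trans (le_max_right _ _) hn
  have hnN₀ : N₀ ≤ n := le_trans (le_max_left _ _) hn
  have hnR : (0:ℝ) < n := by exact_mod_cast hn1
  have hnne : (n:ℝ) ≠ 0 := hnR.ne'
  have hδn : α / n < δ := by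
    rw [div_lt_iff₀ hnR]
    have h1 : α / δ < N₀ := hN₀
    have h2 : (N₀ : ℝ) ≤ n := by exact_mod_cast hnN₀
    rw [div_lt_iff₀ hδ] at h1
    calc α < N₀ * δ := h1
      _ ≤ δ * n := by nlinarith

  -- the cells and tags
  set C : (Fin m → Fin n) → Set (Fin m → ℝ) := fun p =>
    Set.univ.pi fun a => Ico (α * ((p a : ℕ) : ℝ) / n) (α * (((p a : ℕ) : ℝ) + 1) / n) with hC
  set tag : (Fin m → Fin n) → (Fin m → ℝ) := fun p a => α * (((p a : ℕ) : ℝ) + 1/2) / n with htagdef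
  have hCm : ∀ p, MeasurableSet (C p) := fun p =>
    MeasurableSet.univ_pi (fun a => measurableSet_Ico)
  have hstep : ∀ j : ℕ, α * ((j : ℝ) + 1) / n - α * (j : ℝ) / n = α / n := by
    intro j
    field_simp
    ring
  have hvol : ∀ p, volume (C p) = ENNReal.ofReal (α / n) ^ m := by
    intro p
    rw [hC]
    rw [volume_pi_pi]
    have : ∀ a : Fin m, volume (Ico (α * ((p a : ℕ) : ℝ) / n) (α * (((p a : ℕ) : ℝ) + 1) / n))
        = ENNReal.ofReal (α / n) := by
      intro a
      rw [Real.volume_Ico, hstep]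
    simp only [this]
    rw [Finset.prod_const, Finset.card_univ, Fintype.card_fin]
  have hvolfin : ∀ p, volume (C p) < ⊤ := by
    intro p
    rw [hvol p]
    exact ENNReal.pow_lt_top ENNReal.ofReal_lt_top
  have hvolR : ∀ p, (volume (C p)).toReal = (α / n) ^ m := by
    intro p
    rw [hvol p, ENNReal.toReal_pow, ENNReal.toReal_ofReal (by positivity)]
  have hCK : ∀ p, C p ⊆ K := by
    intro p y hy
    rw [hK]
    intro a _
    have hya := hy a (Set.mem_univ a)
    simp only at hya
    constructor
    · exact le_trans (by positivity) hya.1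
    · refine le_trans hya.2.le ?_
      rw [div_le_iff₀ hnR]
      have hpa : ((p a : ℕ) : ℝ) + 1 ≤ n := by
        have := (p a).2
        exact_mod_cast this
      nlinarith
  have htagC : ∀ p, tag p ∈ C p := by
    intro p
    intro a _
    simp only [htagdef]
    constructor
    · gcongr
      linarith
    · gcongr
      linarith
  -- union of cells
  have hunion : (⋃ p : Fin m → Fin n, C p) = Set.univ.pi (fun _ : Fin m => Ico (0:ℝ) α) := by
    ext y
    simp only [Set.mem_iUnion, Set.mem_pi, Set.mem_univ, forall_true_left, hC]
    constructor
    · rintro ⟨p, hp⟩ a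
      have hpa := hp a
      constructor
      · exact le_trans (by positivity) hpa.1
      · refine lt_of_lt_of_le hpa.2 ?_
        rw [div_le_iff₀ hnR]
        have : ((p a : ℕ) : ℝ) + 1 ≤ n := by exact_mod_cast (p a).2
        nlinarith
    · intro hy
      have hfl : ∀ a : Fin m, ⌊y a * n / α⌋₊ < n := by
        intro a
        rw [Nat.floor_lt (by have h0 := (hy a).1; positivity)]
        · rw [div_lt_iff₀ hα]
          have := (hy a).2
          nlinarith
      refine ⟨fun a => ⟨⌊y a * n / α⌋₊, hfl a⟩, fun a => ?_⟩
      have h0 : 0 ≤ y a := (hy a).1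
      constructor
      · rw [div_le_iff₀ hnR]
        have := Nat.floor_le (show 0 ≤ y a * n / α by positivity)
        calc α * (⌊y a * n / α⌋₊ : ℝ) ≤ α * (y a * n / α) := by
              apply mul_le_mul_of_nonneg_left this hα.le
          _ = y a * n := by field_simp
      · rw [lt_div_iff₀ hnR]
        have := Nat.lt_succ_floor (y a * n / α)
        have h2 : y a * n / α < (⌊y a * n / α⌋₊ : ℝ) + 1 := by exact_mod_cast this
        calc y a * n = α * (y a * n / α) := by field_simp
          _ < α * ((⌊y a * n / α⌋₊ : ℝ) + 1) := by
              apply mul_lt_mul_of_pos_left h2 hα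
  -- disjointness
  have hdisj : Pairwise (Function.onFun Disjoint C) := by
    intro p q hpq
    obtain ⟨a, ha⟩ := Function.ne_iff.1 hpq
    apply Set.disjoint_left.2
    intro y hyp hyq
    have h1 := hyp a (Set.mem_univ a)
    have h2 := hyq a (Set.mem_univ a)
    simp only at h1 h2
    have hne : ((p a : ℕ) : ℝ) ≠ ((q a : ℕ) : ℝ) := by
      intro h
      apply ha
      exact Fin.ext (by exact_mod_cast h)
    rcases lt_or_gt_of_ne hne with h | h
    · have : α * (((p a : ℕ) : ℝ) + 1) / n ≤ α * ((q a : ℕ) : ℝ) / n := by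
        gcongr
        have : ((p a : ℕ) : ℝ) + 1 ≤ ((q a : ℕ) : ℝ) := by
          have : (p a : ℕ) < (q a : ℕ) := by exact_mod_cast h
          exact_mod_cast this
        linarith
      linarith [h1.2, h2.1]
    · have : α * (((q a : ℕ) : ℝ) + 1) / n ≤ α * ((p a : ℕ) : ℝ) / n := by
        gcongr
        have : ((q a : ℕ) : ℝ) + 1 ≤ ((p a : ℕ) : ℝ) := by
          have : (q a : ℕ) < (p a : ℕ) := by exact_mod_cast h
          exact_mod_cast this
        linarith
      linarith [h2.2, h1.1]
  -- integrability on cells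
  have hIntC : ∀ p, IntegrableOn f (C p) volume := fun p => hInt.mono_set (hCK p)
  -- a.e. equality of the closed and half-open boxes
  have hae : K =ᵐ[volume] Set.univ.pi (fun _ : Fin m => Ico (0:ℝ) α) := by
    rw [MeasureTheory.ae_eq_set]
    constructor
    · have hsub : Set.univ.pi (fun _ : Fin m => Ico (0:ℝ) α) ⊆ K :=
        Set.pi_mono (fun a _ => Ico_subset_Icc_self)
      have hIco : volume (Set.univ.pi (fun _ : Fin m => Ico (0:ℝ) α))
          = ENNReal.ofReal α ^ m := by
        rw [volume_pi_pi]
        simp [Real.volume_Ico, Finset.prod_const, Finset.card_univ]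
      have hIcc : volume K = ENNReal.ofReal α ^ m := by
        rw [hK, volume_pi_pi]
        simp [Real.volume_Icc, Finset.prod_const, Finset.card_univ]
      rw [measure_diff hsub
        (MeasurableSet.univ_pi (fun a => measurableSet_Ico)).nullMeasurableSet
        (by rw [hIco]; exact (ENNReal.pow_lt_top ENNReal.ofReal_lt_top).ne)]
      rw [hIco, hIcc, tsub_self]
    · have : Set.univ.pi (fun _ : Fin m => Ico (0:ℝ) α) \ K = ∅ := by
        rw [Set.diff_eq_empty]
        exact Set.pi_mono (fun a _ => Ico_subset_Icc_self)
      rw [this, measure_empty]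
  -- decomposition of the integral
  have hdecomp : ∫ x in K, f x = ∑ p : Fin m → Fin n, ∫ x in C p, f x := by
    rw [setIntegral_congr_set hae, ← hunion,
      integral_iUnion_fintype hCm hdisj (fun p => hIntC p)]
  -- per-cell estimate
  have hcell : ∀ p : Fin m → Fin n,
      |(α / n) ^ m * f (tag p) - ∫ x in C p, f x| ≤ ε' * (α / n) ^ m := by
    intro p
    have hconst : ∫ _x in C p, f (tag p) ∂volume = (α / n) ^ m * f (tag p) := by
      rw [setIntegral_const, Measure.real, hvolR, smul_eq_mul]
    have hsub : ∫ x in C p, (f x - f (tag p)) ∂volume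
        = (∫ x in C p, f x) - (α / n) ^ m * f (tag p) := by
      rw [integral_sub (hIntC p) (integrableOn_const (hvolfin p).ne), hconst]
    have hbd : ∀ y ∈ C p, ‖f y - f (tag p)‖ ≤ ε' := by
      intro y hy
      have hdist : dist y (tag p) < δ := by
        have hle : dist y (tag p) ≤ α / n := by
          rw [dist_pi_le_iff (by positivity)]
          intro a
          have hya := hy a (Set.mem_univ a)
          have hta := htagC p a (Set.mem_univ a)
          simp only at hya hta
          rw [Real.dist_eq, abs_le]
          have hup : α * (((p a : ℕ) : ℝ) + 1) / n = α * ((p a : ℕ) : ℝ) / n + α / n := by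
            field_simp
          rw [hup] at hya hta
          constructor <;> [skip; skip] <;>
            [linarith [hya.1, hya.2, hta.1, hta.2]; linarith [hya.1, hya.2, hta.1, hta.2]]
        exact lt_of_le_of_lt hle hδn
      have := hδf y (hCK p hy) (tag p) (hCK p (htagC p))
        hdist
      rw [Real.dist_eq] at this
      rw [Real.norm_eq_abs]
      exact this.le
    have hnorm := norm_setIntegral_le_of_norm_le_const (hvolfin p) hbd
    rw [Real.norm_eq_abs, hsub, Measure.real, hvolR] at hnorm
    calc |(α / n) ^ m * f (tag p) - ∫ x in C p, f x|
        = |(∫ x in C p, f x) - (α / n) ^ m * f (tag p)| := abs_sub_comm _ _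
      _ ≤ ε' * (α / n) ^ m := hnorm
  -- conclusion
  rw [Real.dist_eq, hdecomp, Finset.mul_sum, ← Finset.sum_sub_distrib]
  calc |∑ p : Fin m → Fin n, ((α / n) ^ m * f (tag p) - ∫ x in C p, f x)|
      ≤ ∑ p : Fin m → Fin n, |(α / n) ^ m * f (tag p) - ∫ x in C p, f x| :=
        Finset.abs_sum_le_sum_abs _ _
    _ ≤ ∑ _p : Fin m → Fin n, ε' * (α / n) ^ m := Finset.sum_le_sum fun p _ => hcell p
    _ = (n : ℝ) ^ m * (ε' * (α / n) ^ m) := by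
        rw [Finset.sum_const, Finset.card_univ, Fintype.card_fun, Fintype.card_fin,
          Fintype.card_fin, nsmul_eq_mul]
        push_cast
        ring
    _ = ε' * α ^ m := by
        have hnm : ((n:ℝ)) ^ m ≠ 0 := pow_ne_zero _ hnne
        rw [div_pow]
        field_simp
    _ < ε := by
        rw [hε'def]
        rw [div_mul_eq_mul_div, div_lt_iff₀ (by positivity)]
        nlinarith [pow_pos hα m]





/-- The determinants of the Nyström discretizations I_n - A_n^± converge to the
    Fredholm determinant det(I - K_α^±) of the operator with kernel
    K(x-y) ± K(x+y), K(x) = sin(x)/(πx). -/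
theorem stmt14 (α : ℝ) (hα : 0 < α) (ε : ℝ) (hε : ε = 1 ∨ ε = -1) :
    Tendsto (fun n : ℕ =>
      Matrix.det ((1 : Matrix (Fin n) (Fin n) ℝ) -
        Matrix.of fun j k : Fin n =>
          (α / n) * (sineK (α * (((j : ℕ) : ℝ) - ((k : ℕ) : ℝ)) / n) +
            ε * sineK (α * (((j : ℕ) : ℝ) + ((k : ℕ) : ℝ) + 1) / n))))
      atTop
      (nhds (fredholmDet α (fun x y => sineK (x - y) + ε * sineK (x + y)))) := by
  classical
  obtain ⟨φ, hφc, hφ1, hrep⟩ := exists_phi hε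
  set kk : ℝ → ℝ → ℝ := fun a b => sineK (a - b) + ε * sineK (a + b) with hkk
  set F : (m : ℕ) → (Fin m → ℝ) → ℝ :=
    fun m x => Matrix.det (Matrix.of fun i j : Fin m => kk (x i) (x j)) with hF
  have hFbound : ∀ (m : ℕ) (x : Fin m → ℝ), |F m x| ≤ (2 / Real.pi) ^ m := by
    intro m x
    have hMeq : (Matrix.of fun i j : Fin m => kk (x i) (x j))
        = Matrix.of fun i j : Fin m =>
            (2 / Real.pi) * ∫ t in (0:ℝ)..1, φ (t * x i) * φ (t * x j) := by
      ext i j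
      exact hrep (x i) (x j)
    rw [hF]
    simp only
    rw [hMeq]
    exact gram_det_bound φ hφc hφ1 x
  have hFcont : ∀ m : ℕ, Continuous (F m) := by
    intro m
    apply Continuous.matrix_det
    apply continuous_matrix
    intro i j
    simp only [Matrix.of_apply, hkk]
    exact (continuous_sineK.comp ((continuous_apply i).sub (continuous_apply j))).add
      (continuous_const.mul
        (continuous_sineK.comp ((continuous_apply i).add (continuous_apply j))))
  set g : ℕ → ℝ := fun m => ((-1:ℝ) ^ m / (m.factorial : ℝ)) *
    ∫ x in Set.univ.pi (fun _ : Fin m => Icc (0:ℝ) α), F m x with hg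
  have hfred : fredholmDet α (fun x y => sineK (x - y) + ε * sineK (x + y)) = ∑' m, g m := rfl
  set fseq : ℕ → ℕ → ℝ := fun n m => ((-1:ℝ) ^ m / (m.factorial : ℝ)) *
    ((α / n) ^ m * ∑ p : Fin m → Fin n,
      F m (fun a => α * (((p a : ℕ) : ℝ) + 1/2) / n)) with hfseq
  have hmain : Tendsto (fun n => ∑' m, fseq n m) atTop (nhds (∑' m, g m)) := by
    apply tendsto_tsum_of_dominated_convergence
      (bound := fun m => (α * (2 / Real.pi)) ^ m / (m.factorial : ℝ))
    · exact Real.summable_pow_div_factorial _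
    · intro m
      exact (riemann hα m (hFcont m)).const_mul _
    · filter_upwards [eventually_ge_atTop 1] with n hn m
      have hnR : (0:ℝ) < n := by exact_mod_cast hn
      have hnne : (n:ℝ) ≠ 0 := hnR.ne'
      rw [hfseq]
      simp only
      rw [norm_mul, norm_div, norm_pow, norm_neg, norm_one, one_pow,
        Real.norm_natCast]
      have h1 : ‖(α / n) ^ m * ∑ p : Fin m → Fin n,
          F m (fun a => α * (((p a : ℕ) : ℝ) + 1/2) / n)‖ ≤ (α * (2 / Real.pi)) ^ m := by
        rw [norm_mul, norm_pow, Real.norm_eq_abs, Real.norm_eq_abs,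
          abs_of_nonneg (by positivity : (0:ℝ) ≤ α / n)]
        calc (α / n) ^ m * |∑ p : Fin m → Fin n,
              F m (fun a => α * (((p a : ℕ) : ℝ) + 1/2) / n)|
            ≤ (α / n) ^ m * ((n:ℝ) ^ m * (2 / Real.pi) ^ m) := by
              apply mul_le_mul_of_nonneg_left _ (by positivity)
              calc |∑ p : Fin m → Fin n, F m (fun a => α * (((p a : ℕ) : ℝ) + 1/2) / n)|
                  ≤ ∑ p : Fin m → Fin n, |F m (fun a => α * (((p a : ℕ) : ℝ) + 1/2) / n)| :=
                    Finset.abs_sum_le_sum_abs _ _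
                _ ≤ ∑ _p : Fin m → Fin n, (2 / Real.pi) ^ m :=
                    Finset.sum_le_sum fun p _ => hFbound m _
                _ = (n:ℝ) ^ m * (2 / Real.pi) ^ m := by
                    rw [Finset.sum_const, Finset.card_univ, Fintype.card_fun,
                      Fintype.card_fin, Fintype.card_fin, nsmul_eq_mul]
                    push_cast
                    ring
          _ = (α * (2 / Real.pi)) ^ m := by
              rw [← mul_assoc, ← mul_pow, div_mul_cancel₀ _ hnne, ← mul_pow]
      calc 1 / (m.factorial : ℝ) * ‖(α / n) ^ m * ∑ p : Fin m → Fin n,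
            F m (fun a => α * (((p a : ℕ) : ℝ) + 1/2) / n)‖
          ≤ 1 / (m.factorial : ℝ) * (α * (2 / Real.pi)) ^ m := by
            apply mul_le_mul_of_nonneg_left h1 (by positivity)
        _ = (α * (2 / Real.pi)) ^ m / (m.factorial : ℝ) := by ring
  rw [hfred]
  apply Tendsto.congr' _ hmain
  filter_upwards [eventually_ge_atTop 1] with n hn
  have hnR : (0:ℝ) < n := by exact_mod_cast hn
  have hnne : (n:ℝ) ≠ 0 := hnR.ne'
  set B : Matrix (Fin n) (Fin n) ℝ := Matrix.of fun j k : Fin n =>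
    (α / n) * kk (α * (((j : ℕ) : ℝ) + 1/2) / n) (α * (((k : ℕ) : ℝ) + 1/2) / n) with hB
  have hBeq : (Matrix.of fun j k : Fin n =>
      (α / n) * (sineK (α * (((j : ℕ) : ℝ) - ((k : ℕ) : ℝ)) / n) +
        ε * sineK (α * (((j : ℕ) : ℝ) + ((k : ℕ) : ℝ) + 1) / n))) = B := by
    ext j k
    rw [hB]
    simp only [Matrix.of_apply, hkk]
    congr 2
    · congr 1
      field_simp
      ring
    · congr 1
      field_simp
      ring
  have hdet : ∀ m : ℕ, ∀ p : Fin m → Fin n,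
      (B.submatrix p p).det = (α / n) ^ m *
        F m (fun a => α * (((p a : ℕ) : ℝ) + 1/2) / n) := by
    intro m p
    have hsub : B.submatrix p p = (α / n) •
        Matrix.of (fun a b : Fin m =>
          kk (α * (((p a : ℕ) : ℝ) + 1/2) / n) (α * (((p b : ℕ) : ℝ) + 1/2) / n)) := by
      ext a b
      simp [hB, Matrix.submatrix_apply, Matrix.smul_apply, smul_eq_mul]
    rw [hsub, Matrix.det_smul, Fintype.card_fin]
  calc ∑' m, fseq n m
      = ∑' m : ℕ, ((-1:ℝ) ^ m / (m.factorial : ℝ)) *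
          ∑ p : Fin m → Fin n, (B.submatrix p p).det := by
        apply tsum_congr
        intro m
        rw [hfseq]
        simp only
        congr 1
        rw [Finset.mul_sum]
        apply Finset.sum_congr rfl
        intro p _
        rw [hdet m p]
    _ = (1 - B).det := (det_one_sub_eq_tsum B).symm
    _ = Matrix.det ((1 : Matrix (Fin n) (Fin n) ℝ) -
        Matrix.of fun j k : Fin n =>
          (α / n) * (sineK (α * (((j : ℕ) : ℝ) - ((k : ℕ) : ℝ)) / n) +
            ε * sineK (α * (((j : ℕ) : ℝ) + ((k : ℕ) : ℝ) + 1) / n))) := by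
        rw [hBeq]
end
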